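/- arXiv:1102.5578 — 9 statements merged into one kernel-verified Lean document; each statement's English description precedes it below -/
import Mathlib

section
/- Every locally finite group G embeds into an existentially closed locally finite group H. (Hence existentially closed locally finite groups of every infinite cardinality ≥ |G| exist.) -/
universe u

/-- A group is locally finite if every finitely generated subgroup is finite. -/
def IsLocallyFiniteGroup (G : Type*) [Group G] : Prop :=
  ∀ s : Finset G, (Subgroup.closure (s : Set G) : Set G).Finite

/-- A locally finite group `H` is existentially closed if for all finite groups
`K ⊆ L` and every embedding of `K` into `H`, the embedding extends to an
embedding of `L` into `H`. -/
def IsExistentiallyClosedLF (H : Type*) [Group H] : Prop :=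
  IsLocallyFiniteGroup H ∧
  ∀ (K L : Type) [Group K] [Group L] [Finite L] (i : K →* L),
    Function.Injective i →
    ∀ f : K →* H, Function.Injective f →
      ∃ g : L →* H, Function.Injective g ∧ ∀ x, g (i x) = f x


universe v

namespace ChainColim

variable {T : ℕ → Type u} [∀ n, Group (T n)]

variable (t : ∀ n, T n →* T (n+1))

/-- transition maps -/
def push : ∀ {n m : ℕ}, n ≤ m → T n → T m :=
  fun h x => Nat.leRecOn h (fun {k} y => t k y) x

@[simp] lemma push_self {n : ℕ} (h : n ≤ n) (x : T n) : push t h x = x :=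
  Nat.leRecOn_self x

lemma push_succ {n m : ℕ} (h : n ≤ m) (x : T n) :
    push t (h.trans (Nat.le_succ m)) x = t m (push t h x) :=
  Nat.leRecOn_succ h x

lemma push_succ_of_le {n m : ℕ} (h : n ≤ m + 1) (h' : n ≤ m) (x : T n) :
    push t h x = t m (push t h' x) :=
  Nat.leRecOn_succ h' x

lemma push_push {n m p : ℕ} (h1 : n ≤ m) (h2 : m ≤ p) (x : T n) :
    push t h2 (push t h1 x) = push t (h1.trans h2) x := by
  induction h2 with
  | refl => simp
  | step h ih =>
      rename_i p' hp'
      rw [push_succ_of_le t (Nat.le_succ_of_le h) h, ih,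
        push_succ_of_le t (h1.trans (Nat.le_succ_of_le h)) (h1.trans h)]

lemma push_mul {n m : ℕ} (h : n ≤ m) (x y : T n) :
    push t h (x * y) = push t h x * push t h y := by
  induction h with
  | refl => simp
  | step h ih =>
      rename_i p' hp'
      rw [push_succ_of_le t (Nat.le_succ_of_le h) h,
        push_succ_of_le t (Nat.le_succ_of_le h) h,
        push_succ_of_le t (Nat.le_succ_of_le h) h, ih, map_mul]

lemma push_one {n m : ℕ} (h : n ≤ m) : push t h (1 : T n) = 1 := by
  induction h with
  | refl => simp
  | step h ih =>
      rename_i p' hp'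
      rw [push_succ_of_le t (Nat.le_succ_of_le h) h, ih, map_one]

lemma push_injective (ht : ∀ n, Function.Injective (t n)) {n m : ℕ} (h : n ≤ m) :
    Function.Injective (push t h) := by
  induction h with
  | refl => intro a b hab; simpa using hab
  | step h ih =>
      rename_i p' hp'
      intro a b hab
      rw [push_succ_of_le t (Nat.le_succ_of_le h) h,
        push_succ_of_le t (Nat.le_succ_of_le h) h] at hab
      exact ih (ht _ hab)

/-- the setoid -/
def colimSetoid : Setoid (Σ n, T n) where
  r x y := ∃ (p : ℕ) (hx : x.1 ≤ p) (hy : y.1 ≤ p), push t hx x.2 = push t hy y.2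
  iseqv := by
    constructor
    · rintro ⟨n, x⟩; exact ⟨n, le_refl n, le_refl n, rfl⟩
    · rintro ⟨n, x⟩ ⟨m, y⟩ ⟨p, hx, hy, h⟩; exact ⟨p, hy, hx, h.symm⟩
    · rintro ⟨n, x⟩ ⟨m, y⟩ ⟨q, z⟩ ⟨p, hx, hy, h⟩ ⟨p', hy', hz', h'⟩
      refine ⟨max p p', hx.trans (le_max_left _ _), hz'.trans (le_max_right _ _), ?_⟩
      rw [← push_push t hx (le_max_left p p'), ← push_push t hz' (le_max_right p p'), h, ← h',
        push_push, push_push]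

/-- the colimit -/
def Colim (t : ∀ n, T n →* T (n+1)) : Type u := Quotient (colimSetoid t)

def mk (n : ℕ) (x : T n) : Colim t := Quotient.mk (colimSetoid t) ⟨n, x⟩

lemma mk_eq_iff {n m : ℕ} (x : T n) (y : T m) :
    mk t n x = mk t m y ↔ ∃ (p : ℕ) (hx : n ≤ p) (hy : m ≤ p), push t hx x = push t hy y :=
  Quotient.eq (r := colimSetoid t)

lemma mk_push {n m : ℕ} (h : n ≤ m) (x : T n) : mk t m (push t h x) = mk t n x := by
  rw [mk_eq_iff]
  exact ⟨m, le_refl m, h, by simp⟩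

instance : Mul (Colim t) where
  mul := Quotient.lift₂ (fun x y =>
      mk t (max x.1 y.1) (push t (le_max_left _ _) x.2 * push t (le_max_right _ _) y.2))
    (by
      rintro ⟨n, a⟩ ⟨m, b⟩ ⟨n', a'⟩ ⟨m', b'⟩ ⟨p, ha, ha', hh⟩ ⟨q, hb, hb', hh'⟩
      dsimp only
      rw [mk_eq_iff]
      set P := max (max (max n m) (max n' m')) (max p q) with hP
      have h1 : max n m ≤ P := le_max_of_le_left (le_max_left _ _)
      have h2 : max n' m' ≤ P := le_max_of_le_left (le_max_right _ _)
      have hpP : p ≤ P := le_max_of_le_right (le_max_left _ _)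
      have hqP : q ≤ P := le_max_of_le_right (le_max_right _ _)
      refine ⟨P, h1, h2, ?_⟩
      rw [push_mul, push_mul, push_push, push_push, push_push, push_push]
      have e1 : push t (ha.trans hpP) a = push t (ha'.trans hpP) a' := by
        rw [← push_push t ha hpP, hh, push_push]
      have e2 : push t (hb.trans hqP) b = push t (hb'.trans hqP) b' := by
        rw [← push_push t hb hqP, hh', push_push]
      exact congrArg₂ (· * ·) e1 e2)

lemma mk_mul_mk {n : ℕ} (x y : T n) : mk t n x * mk t n y = mk t n (x * y) := by
  show mk t (max n n) (push t (le_max_left n n) x * push t (le_max_right n n) y) = _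
  have h : push t (le_max_left n n) x * push t (le_max_right n n) y
      = push t (le_max_left n n) (x * y) := by
    rw [push_mul]
  rw [h, mk_push]

lemma exists_rep (x : Colim t) : ∃ n a, x = mk t n a := by
  induction x using Quotient.ind with
  | _ p => exact ⟨p.1, p.2, rfl⟩

lemma exists_rep₂ (x y : Colim t) : ∃ n a b, x = mk t n a ∧ y = mk t n b := by
  obtain ⟨n, a, rfl⟩ := exists_rep t x
  obtain ⟨m, b, rfl⟩ := exists_rep t y
  refine ⟨max n m, push t (le_max_left _ _) a, push t (le_max_right _ _) b, ?_, ?_⟩ <;>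
    rw [mk_push]

lemma exists_rep₃ (x y z : Colim t) : ∃ n a b c, x = mk t n a ∧ y = mk t n b ∧ z = mk t n c := by
  obtain ⟨n, a, b, rfl, rfl⟩ := exists_rep₂ t x y
  obtain ⟨m, c, rfl⟩ := exists_rep t z
  refine ⟨max n m, push t (le_max_left _ _) a, push t (le_max_left _ _) b,
    push t (le_max_right _ _) c, ?_, ?_, ?_⟩ <;> rw [mk_push]

instance : One (Colim t) := ⟨mk t 0 1⟩

lemma one_def : (1 : Colim t) = mk t 0 1 := rfl

lemma mk_one (n : ℕ) : mk t n 1 = (1 : Colim t) := by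
  rw [one_def, ← push_one t (Nat.zero_le n), mk_push]

instance : Inv (Colim t) where
  inv := Quotient.map (fun x => ⟨x.1, x.2⁻¹⟩)
    (by
      rintro ⟨n, a⟩ ⟨m, b⟩ ⟨p, ha, hb, h⟩
      refine ⟨p, ha, hb, ?_⟩
      show push t ha a⁻¹ = push t hb b⁻¹
      have inv_push : ∀ {n₀ m₀ : ℕ} (h₀ : n₀ ≤ m₀) (z : T n₀),
          push t h₀ z⁻¹ = (push t h₀ z)⁻¹ := by
        intro n₀ m₀ h₀ z
        have h1 : push t h₀ z⁻¹ * push t h₀ z = 1 := by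
          rw [← push_mul, inv_mul_cancel, push_one]
        exact eq_inv_of_mul_eq_one_left h1
      rw [inv_push, inv_push, h])

lemma mk_inv {n : ℕ} (x : T n) : (mk t n x)⁻¹ = mk t n x⁻¹ := rfl

instance : Group (Colim t) where
  mul_assoc x y z := by
    obtain ⟨n, a, b, c, rfl, rfl, rfl⟩ := exists_rep₃ t x y z
    rw [mk_mul_mk, mk_mul_mk, mk_mul_mk, mk_mul_mk, mul_assoc]
  one_mul x := by
    obtain ⟨n, a, rfl⟩ := exists_rep t x
    rw [← mk_one t n, mk_mul_mk, one_mul]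
  mul_one x := by
    obtain ⟨n, a, rfl⟩ := exists_rep t x
    rw [← mk_one t n, mk_mul_mk, mul_one]
  inv_mul_cancel x := by
    obtain ⟨n, a, rfl⟩ := exists_rep t x
    rw [mk_inv, mk_mul_mk, inv_mul_cancel, mk_one]

/-- the canonical maps into the colimit -/
def into (n : ℕ) : T n →* Colim t where
  toFun := mk t n
  map_one' := mk_one t n
  map_mul' x y := (mk_mul_mk t x y).symm

lemma into_apply (n : ℕ) (x : T n) : into t n x = mk t n x := rfl

lemma into_push {n m : ℕ} (h : n ≤ m) (x : T n) : into t m (push t h x) = into t n x :=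
  mk_push t h x

lemma into_injective (ht : ∀ n, Function.Injective (t n)) (n : ℕ) :
    Function.Injective (into t n) := by
  intro a b hab
  rw [into_apply, into_apply, mk_eq_iff] at hab
  obtain ⟨p, ha, hb, h⟩ := hab
  exact push_injective t ht ha (h.trans (by rfl))

lemma range_mono {n m : ℕ} (h : n ≤ m) :
    Set.range (into t n) ⊆ Set.range (into t m) := by
  rintro _ ⟨a, rfl⟩
  exact ⟨push t h a, into_push t h a⟩

lemma mem_range (x : Colim t) : ∃ n, x ∈ Set.range (into t n) := by
  obtain ⟨n, a, rfl⟩ := exists_rep t x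
  exact ⟨n, a, rfl⟩

end ChainColim

namespace LF

variable (N : Type u) [Group N]

/-- The group of permutations with finitely generated multiplier set. -/
def LFsub : Subgroup (Equiv.Perm N) where
  carrier := {σ | ∃ s : Finset N, ∀ x, σ x * x⁻¹ ∈ Subgroup.closure (s : Set N)}
  one_mem' := ⟨∅, fun x => by simp⟩
  mul_mem' := by
    classical
    rintro σ τ ⟨s, hs⟩ ⟨s', hs'⟩
    refine ⟨s ∪ s', fun x => ?_⟩
    have h1 : σ (τ x) * (τ x)⁻¹ ∈ Subgroup.closure ((s : Set N) ∪ s') :=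
      Subgroup.closure_mono Set.subset_union_left (hs (τ x))
    have h2 : τ x * x⁻¹ ∈ Subgroup.closure ((s : Set N) ∪ s') :=
      Subgroup.closure_mono Set.subset_union_right (hs' x)
    have : (σ * τ) x * x⁻¹ = (σ (τ x) * (τ x)⁻¹) * (τ x * x⁻¹) := by
      simp [Equiv.Perm.mul_apply, mul_assoc]
    rw [Finset.coe_union] at *
    rw [this]
    exact mul_mem h1 h2
  inv_mem' := by
    rintro σ ⟨s, hs⟩
    refine ⟨s, fun x => ?_⟩
    have := hs (σ⁻¹ x)
    rw [show σ (σ⁻¹ x) = x from Equiv.apply_symm_apply σ x] at this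
    have h2 : σ⁻¹ x * x⁻¹ = (x * (σ⁻¹ x)⁻¹)⁻¹ := by group
    rw [h2]
    exact inv_mem this

/-- left multiplication embedding -/
def lmul : N →* Equiv.Perm N where
  toFun n := Equiv.mulLeft n
  map_one' := by ext x; simp
  map_mul' a b := by ext x; simp [Equiv.Perm.mul_apply, mul_assoc]

lemma lmul_apply (n x : N) : lmul N n x = n * x := rfl

lemma lmul_injective : Function.Injective (lmul N) := by
  intro a b h
  have h2 : lmul N a 1 = lmul N b 1 := by rw [h]
  simpa [lmul_apply] using h2

lemma lmul_mem_LFsub (n : N) : lmul N n ∈ LFsub N := by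
  refine ⟨{n}, fun x => ?_⟩
  have : lmul N n x * x⁻¹ = n := by simp [lmul_apply, mul_assoc]
  rw [this]
  exact Subgroup.subset_closure (by simp)

end LF

namespace LF

variable {N : Type u} [Group N]

lemma mem_LFsub_iff {σ : Equiv.Perm N} :
    σ ∈ LFsub N ↔ ∃ s : Finset N, ∀ x, σ x * x⁻¹ ∈ Subgroup.closure (s : Set N) := Iff.rfl

/-- code of a point -/
def code (Φ : Finset (Equiv.Perm N)) (F : Subgroup N) (x : N) :
    Option {x // x ∈ Φ} → ↥F → ↥F → Prop := fun o a b =>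
  match o with
  | none => (a : N) * x = (b : N) * x
  | some σ => σ.1 ((a : N) * x) = (b : N) * x

/-- the pattern-respecting subgroup -/
def patt (Φ : Finset (Equiv.Perm N)) (F : Subgroup N) : Subgroup (Equiv.Perm N) where
  carrier := {σ | (∀ x, σ x * x⁻¹ ∈ F) ∧
      ∀ x y, code Φ F x = code Φ F y → ∀ a b : ↥F,
        σ ((a : N) * x) = (b : N) * x → σ ((a : N) * y) = (b : N) * y}
  one_mem' := by
    constructor
    · intro x; simp [one_mem]
    · intro x y hcx a b h
      have hnone := congrFun (congrFun (congrFun hcx none) a) b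
      simp only [code] at hnone
      rw [Equiv.Perm.one_apply] at h ⊢
      exact hnone ▸ h
  mul_mem' := by
    rintro σ τ ⟨hσ1, hσ2⟩ ⟨hτ1, hτ2⟩
    constructor
    · intro x
      have e : (σ * τ) x * x⁻¹ = (σ (τ x) * (τ x)⁻¹) * (τ x * x⁻¹) := by
        simp [Equiv.Perm.mul_apply, mul_assoc]
      rw [e]; exact mul_mem (hσ1 _) (hτ1 _)
    · intro x y hcx a b h
      set a₁ : ↥F := ⟨(τ ((a : N) * x) * ((a : N) * x)⁻¹) * a, mul_mem (hτ1 _) a.2⟩ with ha₁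
      have h1 : τ ((a : N) * x) = (a₁ : N) * x := by
        show _ = ((τ ((a : N) * x) * ((a : N) * x)⁻¹) * a) * x
        group
      have h2 : τ ((a : N) * y) = (a₁ : N) * y := hτ2 x y hcx a a₁ h1
      have h3 : σ ((a₁ : N) * x) = (b : N) * x := by
        rw [← h1]
        simpa [Equiv.Perm.mul_apply] using h
      have h4 : σ ((a₁ : N) * y) = (b : N) * y := hσ2 x y hcx a₁ b h3
      rw [Equiv.Perm.mul_apply, h2]
      exact h4
  inv_mem' := by
    rintro σ ⟨hσ1, hσ2⟩
    constructor
    · intro x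
      have h0 := hσ1 (σ⁻¹ x)
      rw [show σ (σ⁻¹ x) = x from Equiv.apply_symm_apply σ x] at h0
      have e : σ⁻¹ x * x⁻¹ = (x * (σ⁻¹ x)⁻¹)⁻¹ := by group
      rw [e]; exact inv_mem h0
    · intro x y hcx a b h
      have h1 : σ ((b : N) * x) = (a : N) * x := by
        rw [← h]; exact Equiv.apply_symm_apply σ _
      have h2 : σ ((b : N) * y) = (a : N) * y := hσ2 x y hcx b a h1
      rw [← h2]; exact Equiv.symm_apply_apply σ _

lemma mem_patt {Φ : Finset (Equiv.Perm N)} {F : Subgroup N} {σ : Equiv.Perm N} :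
    σ ∈ patt Φ F ↔ (∀ x, σ x * x⁻¹ ∈ F) ∧
      ∀ x y, code Φ F x = code Φ F y → ∀ a b : ↥F,
        σ ((a : N) * x) = (b : N) * x → σ ((a : N) * y) = (b : N) * y := Iff.rfl

theorem closure_finite_of_multipliers (hN : IsLocallyFiniteGroup N)
    (Φ : Finset (Equiv.Perm N)) (hΦ : ∀ σ ∈ Φ, σ ∈ LFsub N) :
    (Subgroup.closure (Φ : Set (Equiv.Perm N)) : Set (Equiv.Perm N)).Finite := by
  classical
  choose sf hsf using fun (σ : {x // x ∈ Φ}) => mem_LFsub_iff.mp (hΦ σ.1 σ.2)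
  set s₀ : Finset N := Φ.attach.biUnion (fun σ => sf σ) with hs₀
  set F : Subgroup N := Subgroup.closure (s₀ : Set N) with hFdef
  have hF : (F : Set N).Finite := hN s₀
  haveI : Finite ↥F := hF.to_subtype
  have hmult : ∀ σ : {x // x ∈ Φ}, ∀ x : N, σ.1 x * x⁻¹ ∈ F := by
    intro σ x
    refine Subgroup.closure_mono ?_ (hsf σ x)
    exact_mod_cast Finset.coe_subset.mpr (Finset.subset_biUnion_of_mem _ (Finset.mem_attach _ σ))
  have hΦA : ∀ σ ∈ Φ, σ ∈ patt Φ F := by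
    intro σ hσ
    refine ⟨hmult ⟨σ, hσ⟩, ?_⟩
    intro x y hcx a b h
    have hsome := congrFun (congrFun (congrFun hcx (some ⟨σ, hσ⟩)) a) b
    simp only [code] at hsome
    exact hsome ▸ h
  have hle : Subgroup.closure (Φ : Set (Equiv.Perm N)) ≤ patt Φ F :=
    (Subgroup.closure_le _).mpr (fun σ hσ => hΦA σ hσ)
  set Ψ : Equiv.Perm N → ((Option {x // x ∈ Φ} → ↥F → ↥F → Prop) → ↥F → ↥F → Prop) :=
    fun σ v a b => ∃ x, code Φ F x = v ∧ σ ((a : N) * x) = (b : N) * x with hΨ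
  have hinj : Set.InjOn Ψ (patt Φ F : Set (Equiv.Perm N)) := by
    intro σ hσA τ hτA he
    rw [SetLike.mem_coe, mem_patt] at hσA hτA
    ext p
    have hb : σ p * p⁻¹ ∈ F := hσA.1 p
    set b : ↥F := ⟨σ p * p⁻¹, hb⟩ with hbdef
    have h1 : σ ((1 : N) * p) = (b : N) * p := by
      show σ (1 * p) = (σ p * p⁻¹) * p
      group
    have hΨσ : Ψ σ (code Φ F p) 1 b := ⟨p, rfl, by simpa using h1⟩
    have hΨτ : Ψ τ (code Φ F p) 1 b := by
      have := congrFun (congrFun (congrFun he (code Φ F p)) 1) b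
      exact this ▸ hΨσ
    obtain ⟨y, hcy, hty⟩ := hΨτ
    have h2 : τ ((1 : N) * p) = (b : N) * p := hτA.2 y p hcy 1 b (by simpa using hty)
    have h3 : τ p = (σ p * p⁻¹) * p := by rw [one_mul] at h2; exact h2
    have h4 : σ p = (σ p * p⁻¹) * p := by group
    rw [h3, ← h4]
  have hAfin : (patt Φ F : Set (Equiv.Perm N)).Finite :=
    Set.Finite.of_finite_image (Set.toFinite _) hinj
  exact hAfin.subset hle

theorem isLocallyFinite_LFsub (hN : IsLocallyFiniteGroup N) :
    IsLocallyFiniteGroup ↥(LFsub N) := by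
  classical
  intro s
  have key := closure_finite_of_multipliers hN (s.image (LFsub N).subtype)
    (by
      intro σ hσ
      rw [Finset.mem_image] at hσ
      obtain ⟨x, _, rfl⟩ := hσ
      exact x.2)
  have himg : ((LFsub N).subtype '' ((Subgroup.closure (s : Set ↥(LFsub N))) : Set _)).Finite := by
    rw [← Subgroup.coe_map, MonoidHom.map_closure]
    have : ((LFsub N).subtype '' (s : Set ↥(LFsub N))) = ((s.image (LFsub N).subtype : Finset (Equiv.Perm N)) : Set _) := by
      rw [Finset.coe_image]
    rw [this]
    exact key
  exact Set.Finite.of_finite_image himg (Subtype.coe_injective.injOn)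

end LF

namespace Heart

variable {K : Type u} {M : Type v} [Group K] [Group M]

/-- orbit setoid of a free action by left multiplication through `α` -/
def orbSetoid (α : K →* M) : Setoid M where
  r x y := ∃ k, x = α k * y
  iseqv := by
    constructor
    · intro x; exact ⟨1, by simp⟩
    · rintro x y ⟨k, rfl⟩; exact ⟨k⁻¹, by simp [← mul_assoc, ← map_mul]⟩
    · rintro x y z ⟨k, rfl⟩ ⟨k', rfl⟩; exact ⟨k * k', by simp [mul_assoc, map_mul]⟩

lemma exists_free_triv (α : K →* M) (hα : Function.Injective α) :
    ∃ (Ω : Type v) (b : M ≃ K × Ω), ∀ (k : K) (x : M), b (α k * x) = (k * (b x).1, (b x).2) := by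
  classical
  letI s := orbSetoid α
  have hsec : ∀ x : M, ∃ k, (Quotient.mk s x).out = α k * x := fun x => Quotient.mk_out (s := s) x
  choose sec hsec using hsec
  have key : ∀ x : M, x = α (sec x)⁻¹ * (Quotient.mk s x).out := by
    intro x
    rw [hsec x, ← mul_assoc, ← map_mul, inv_mul_cancel, map_one, one_mul]
  -- sec is a "cocycle": sec (α k * x) = sec x * k⁻¹
  have hcoc : ∀ (k : K) (x : M), sec (α k * x) = sec x * k⁻¹ := by
    intro k x
    have hq : (Quotient.mk s (α k * x)) = Quotient.mk s x := Quotient.sound ⟨k, rfl⟩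
    have h1 : α (sec (α k * x) * k) * x = α (sec x) * x := by
      rw [map_mul, mul_assoc]
      rw [← hsec (α k * x), hq, hsec x]
    have h2 : sec (α k * x) * k = sec x := hα (mul_right_cancel h1)
    rw [← h2, mul_assoc, mul_inv_cancel, mul_one]
  refine ⟨Quotient s, ⟨fun x => ((sec x)⁻¹, Quotient.mk s x),
    fun p => α p.1 * (p.2).out, ?_, ?_⟩, ?_⟩
  · intro x
    exact (key x).symm
  · rintro ⟨k, q⟩
    have hq : Quotient.mk s (α k * q.out) = q := by
      rw [Quotient.sound (⟨k, rfl⟩ : s.r (α k * q.out) q.out)]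
      exact Quotient.out_eq q
    have hk : sec (α k * q.out) = sec q.out * k⁻¹ := hcoc k q.out
    have hsecout : sec q.out = 1 := by
      have h1 : α (sec q.out) * q.out = q.out := by
        rw [← hsec q.out, Quotient.out_eq]
      have : α (sec q.out) * q.out = α 1 * q.out := by simpa using h1
      exact hα (mul_right_cancel this)
    simp only [Prod.mk.injEq]
    constructor
    · rw [hk, hsecout, one_mul, inv_inv]
    · exact hq
  · intro k x
    simp only [Equiv.coe_fn_mk, Prod.mk.injEq]
    constructor
    · rw [hcoc k x, mul_inv_rev, inv_inv]
    · exact Quotient.sound ⟨k, rfl⟩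

end Heart

namespace Heart

theorem heart {K L F : Type*} [Group K] [Group L] [Group F] [Finite L] [Finite F]
    (i : K →* L) (hi : Function.Injective i) (φ : K →* F) (hφ : Function.Injective φ)
    (hdvd : Nat.card L ∣ Nat.card F) :
    ∃ Ψ : L →* Equiv.Perm F, Function.Injective Ψ ∧ ∀ k f, Ψ (i k) f = φ k * f := by
  classical
  obtain ⟨m, hm⟩ := hdvd
  haveI : Finite K := Finite.of_injective i hi
  obtain ⟨Ω₁, b₁, hb₁⟩ := exists_free_triv φ hφ
  obtain ⟨Ω₂, b₂, hb₂⟩ := exists_free_triv i hi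
  haveI : Finite (K × Ω₁) := Finite.of_equiv F b₁
  haveI : Finite (K × Ω₂) := Finite.of_equiv L b₂
  haveI : Finite Ω₁ := Finite.of_injective (fun ω => ((1 : K), ω))
    (fun a b h => (Prod.mk.injEq _ _ _ _).mp h |>.2)
  haveI : Finite Ω₂ := Finite.of_injective (fun ω => ((1 : K), ω))
    (fun a b h => (Prod.mk.injEq _ _ _ _).mp h |>.2)
  have hcF : Nat.card F = Nat.card K * Nat.card Ω₁ := by
    rw [Nat.card_congr b₁, Nat.card_prod]
  have hcL : Nat.card L = Nat.card K * Nat.card Ω₂ := by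
    rw [Nat.card_congr b₂, Nat.card_prod]
  have hK0 : Nat.card K ≠ 0 := Nat.card_ne_zero.mpr ⟨⟨1⟩, inferInstance⟩
  have hm0 : m ≠ 0 := by
    intro h
    rw [h, mul_zero] at hm
    exact (Nat.card_ne_zero.mpr ⟨⟨1⟩, inferInstance⟩ : Nat.card F ≠ 0) hm
  have hΩ : Nat.card Ω₁ = Nat.card Ω₂ * m := by
    have h1 : Nat.card K * Nat.card Ω₁ = Nat.card K * (Nat.card Ω₂ * m) := by
      rw [← hcF, hm, hcL, mul_assoc]
    exact Nat.eq_of_mul_eq_mul_left (Nat.pos_of_ne_zero hK0) h1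
  obtain ⟨e⟩ : Nonempty (Ω₁ ≃ Ω₂ × Fin m) := by
    haveI := Fintype.ofFinite Ω₁
    haveI := Fintype.ofFinite Ω₂
    apply Fintype.card_eq.mp
    rw [Fintype.card_prod, Fintype.card_fin, ← Nat.card_eq_fintype_card,
      ← Nat.card_eq_fintype_card, hΩ]
  let B : F ≃ L × Fin m :=
    b₁.trans ((Equiv.prodCongr (Equiv.refl K) e).trans
      ((Equiv.prodAssoc K Ω₂ (Fin m)).symm.trans (Equiv.prodCongr b₂.symm (Equiv.refl (Fin m)))))
  have hb₂symm : ∀ (k : K) (a : K) (w : Ω₂), b₂.symm (k * a, w) = i k * b₂.symm (a, w) := by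
    intro k a w
    have h1 : b₂ (i k * b₂.symm (a, w)) = (k * a, w) := by
      rw [hb₂ k (b₂.symm (a, w))]
      simp
    rw [← h1, Equiv.symm_apply_apply]
  have hB : ∀ (k : K) (x : F), B (φ k * x) = (i k * (B x).1, (B x).2) := by
    intro k x
    have h0 : b₁ (φ k * x) = (k * (b₁ x).1, (b₁ x).2) := hb₁ k x
    show (b₂.symm.prodCongr (Equiv.refl (Fin m)))
        ((Equiv.prodAssoc K Ω₂ (Fin m)).symm
          (((Equiv.refl K).prodCongr e) (b₁ (φ k * x)))) = _
    rw [h0]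
    show (b₂.symm (k * (b₁ x).1, (e (b₁ x).2).1), (e (b₁ x).2).2) = _
    have hrhs : B x = (b₂.symm ((b₁ x).1, (e (b₁ x).2).1), (e (b₁ x).2).2) := rfl
    rw [hrhs, hb₂symm]
  have hFne : Nonempty F := ⟨1⟩
  let act : L → Equiv.Perm F := fun l =>
    B.trans ((Equiv.prodCongr (Equiv.mulLeft l) (Equiv.refl (Fin m))).trans B.symm)
  have hact : ∀ (l : L) (x : F), act l x = B.symm (l * (B x).1, (B x).2) := by
    intro l x
    show B.symm ((Equiv.prodCongr (Equiv.mulLeft l) (Equiv.refl (Fin m))) (B x)) = _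
    rcases hbx : B x with ⟨l₀, j₀⟩
    rfl
  let Ψ : L →* Equiv.Perm F :=
    { toFun := act
      map_one' := by
        ext x
        rw [hact]
        simp
      map_mul' := by
        intro l₁ l₂
        ext x
        rw [Equiv.Perm.mul_apply, hact, hact, hact, Equiv.apply_symm_apply]
        simp [mul_assoc] }
  have hΨact : ∀ l, Ψ l = act l := fun l => rfl
  refine ⟨Ψ, ?_, ?_⟩
  · rw [injective_iff_map_eq_one]
    intro l hl
    set x₀ : F := B.symm (1, ⟨0, Nat.pos_of_ne_zero hm0⟩) with hx₀
    have h1 : act l x₀ = x₀ := by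
      rw [← hΨact, hl]; rfl
    rw [hact, hx₀, Equiv.apply_symm_apply] at h1
    have h2 := B.symm.injective (h1.trans (rfl :
      B.symm (1, (⟨0, Nat.pos_of_ne_zero hm0⟩ : Fin m)) = _))
    have h3 : l * 1 = 1 := ((Prod.mk.injEq _ _ _ _).mp h2).1
    simpa using h3
  · intro k f
    rw [hΨact, hact, ← hB, Equiv.symm_apply_apply]

end Heart

namespace LF

theorem step_ext {N : Type u} [Group N] {K L : Type*} [Group K] [Group L] [Finite L]
    (i : K →* L) (hi : Function.Injective i) (φ : K →* N) (hφ : Function.Injective φ)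
    (F : Subgroup N) (hF : (F : Set N).Finite)
    (hφF : ∀ k, φ k ∈ F) (hdvd : Nat.card L ∣ Nat.card ↥F) :
    ∃ ψ : L →* ↥(LFsub N), Function.Injective ψ ∧
      ∀ k, (ψ (i k) : Equiv.Perm N) = lmul N (φ k) := by
  classical
  haveI : Finite ↥F := hF.to_subtype
  set φ' : K →* ↥F := φ.codRestrict F hφF with hφ'def
  have hφ' : Function.Injective φ' := by
    intro a b h
    apply hφ
    have := congrArg (Subtype.val) h
    exact this
  obtain ⟨Ψ, hΨinj, hΨ⟩ := Heart.heart i hi φ' hφ' hdvd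
  obtain ⟨Ω, b, hb⟩ := Heart.exists_free_triv F.subtype Subtype.coe_injective
  have hbsymm : ∀ (g f : ↥F) (ω : Ω), b.symm (g * f, ω) = (g : N) * b.symm (f, ω) := by
    intro g f ω
    have h1 : b (F.subtype g * b.symm (f, ω)) = (g * f, ω) := by
      rw [hb g (b.symm (f, ω))]
      simp
    rw [← h1, Equiv.symm_apply_apply]
    rfl
  let cj : Equiv.Perm ↥F → Equiv.Perm N := fun σ =>
    b.trans ((Equiv.prodCongr σ (Equiv.refl Ω)).trans b.symm)
  have hcj : ∀ (σ : Equiv.Perm ↥F) (x : N), cj σ x = b.symm (σ (b x).1, (b x).2) := by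
    intro σ x
    rfl
  have hmult : ∀ (σ : Equiv.Perm ↥F) (x : N), cj σ x * x⁻¹ = ((σ (b x).1 * ((b x).1)⁻¹ : ↥F) : N) := by
    intro σ x
    rw [hcj]
    have h1 : b.symm (σ (b x).1, (b x).2)
        = ((σ (b x).1 * ((b x).1)⁻¹ : ↥F) : N) * b.symm ((b x).1, (b x).2) := by
      rw [← hbsymm]
      congr 1
      rw [Prod.mk.injEq]
      exact ⟨by group, rfl⟩
    rw [h1]
    simp
  set ψ₀ : L →* Equiv.Perm N :=
    { toFun := fun l => cj (Ψ l)
      map_one' := by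
        ext x
        rw [hcj]
        simp
      map_mul' := by
        intro l₁ l₂
        ext x
        show cj (Ψ (l₁ * l₂)) x = cj (Ψ l₁) (cj (Ψ l₂) x)
        rw [map_mul, hcj, hcj, hcj, Equiv.apply_symm_apply, Equiv.Perm.mul_apply] } with hψ₀def
  have hψ₀mem : ∀ l, ψ₀ l ∈ LFsub N := by
    intro l
    refine ⟨hF.toFinset, fun x => ?_⟩
    have h1 : (hF.toFinset : Set N) = (F : Set N) := hF.coe_toFinset
    rw [h1, Subgroup.closure_eq]
    show cj (Ψ l) x * x⁻¹ ∈ F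
    rw [hmult]
    exact ((Ψ l) (b x).1 * ((b x).1)⁻¹).2
  set ψ : L →* ↥(LFsub N) := ψ₀.codRestrict (LFsub N) hψ₀mem with hψdef
  have hψ₀inj : Function.Injective ψ₀ := by
    have hNe : Nonempty N := ⟨1⟩
    intro l₁ l₂ h
    apply hΨinj
    ext f
    set ω₀ : Ω := (b 1).2 with hω₀
    have h1 : ∀ l : L, ψ₀ l (b.symm (f, ω₀)) = b.symm (Ψ l f, ω₀) := by
      intro l
      show cj (Ψ l) (b.symm (f, ω₀)) = _
      rw [hcj, Equiv.apply_symm_apply]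
    have h2 := congrArg (fun (σ : Equiv.Perm N) => σ (b.symm (f, ω₀))) h
    rw [h1, h1] at h2
    have h3 := b.symm.injective h2
    exact congrArg Subtype.val ((Prod.mk.injEq _ _ _ _).mp h3).1
  refine ⟨ψ, ?_, ?_⟩
  · intro a c h
    apply hψ₀inj
    have := congrArg (Subtype.val) h
    exact this
  · intro k
    show ψ₀ (i k) = lmul N (φ k)
    ext x
    show cj (Ψ (i k)) x = φ k * x
    rw [hcj]
    have h1 : Ψ (i k) (b x).1 = φ' k * (b x).1 := hΨ k (b x).1
    rw [h1, hbsymm]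
    have h2 : ((φ' k : ↥F) : N) = φ k := rfl
    rw [h2]
    congr 1
    conv_rhs => rw [← Equiv.symm_apply_apply b x]

end LF

namespace LFQ

/-- direct sum of cyclic groups of all orders, infinitely many of each -/
abbrev Qgrp : Type := Π₀ p : ℕ × ℕ, ZMod (p.1 + 1)

theorem qlf : IsLocallyFiniteGroup (Multiplicative Qgrp) := by
  classical
  intro s
  set S : Finset (ℕ × ℕ) := s.biUnion (fun x => (Multiplicative.toAdd x).support) with hS
  set B : Subgroup (Multiplicative Qgrp) :=
    { carrier := {x | (Multiplicative.toAdd x).support ⊆ S}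
      one_mem' := by
        show DFinsupp.support (Multiplicative.toAdd (1 : Multiplicative Qgrp)) ⊆ S
        simp
      mul_mem' := by
        intro a b ha hb
        show DFinsupp.support (Multiplicative.toAdd a + Multiplicative.toAdd b) ⊆ S
        refine (DFinsupp.support_add).trans ?_
        exact Finset.union_subset ha hb
      inv_mem' := by
        intro a ha
        show DFinsupp.support (-(Multiplicative.toAdd a)) ⊆ S
        rw [DFinsupp.support_neg]
        exact ha } with hB
  have hle : Subgroup.closure (s : Set (Multiplicative Qgrp)) ≤ B := by
    apply (Subgroup.closure_le _).mpr
    intro x hx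
    show (Multiplicative.toAdd x).support ⊆ S
    exact Finset.subset_biUnion_of_mem _ hx
  have hBfin : Finite ↥B := by
    set Θ : ↥B → (∀ p : ↥S, ZMod (p.1.1 + 1)) := fun x p => (Multiplicative.toAdd x.1) p.1 with hΘ
    have hinj : Function.Injective Θ := by
      intro x y h
      apply Subtype.ext
      apply Multiplicative.toAdd.injective
      ext p
      by_cases hp : p ∈ S
      · exact congrFun h ⟨p, hp⟩
      · have hx : p ∉ (Multiplicative.toAdd x.1).support := fun hc => hp (x.2 hc)
        have hy : p ∉ (Multiplicative.toAdd y.1).support := fun hc => hp (y.2 hc)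
        rw [DFinsupp.notMem_support_iff] at hx hy
        rw [hx, hy]
    exact Finite.of_injective Θ hinj
  have : (B : Set (Multiplicative Qgrp)).Finite := Set.toFinite _
  exact this.subset hle

theorem prod_lf {A B : Type*} [Group A] [Group B]
    (hA : IsLocallyFiniteGroup A) (hB : IsLocallyFiniteGroup B) :
    IsLocallyFiniteGroup (A × B) := by
  classical
  intro s
  have hle : Subgroup.closure (s : Set (A × B)) ≤
      (Subgroup.closure ((s.image Prod.fst : Finset A) : Set A)).prod
        (Subgroup.closure ((s.image Prod.snd : Finset B) : Set B)) := by
    apply (Subgroup.closure_le _).mpr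
    intro x hx
    constructor
    · exact Subgroup.subset_closure (by simp only [Finset.coe_image]; exact ⟨x, hx, rfl⟩)
    · exact Subgroup.subset_closure (by simp only [Finset.coe_image]; exact ⟨x, hx, rfl⟩)
  have hfin : ((Subgroup.closure ((s.image Prod.fst : Finset A) : Set A)).prod
      (Subgroup.closure ((s.image Prod.snd : Finset B) : Set B)) : Set (A × B)).Finite := by
    rw [Subgroup.coe_prod]
    exact Set.Finite.prod (hA _) (hB _)
  exact hfin.subset hle

end LFQ

namespace LFQ

theorem envelope {A : Type u} [Group A] {K : Type*} [Group K] [Finite K]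
    (f : K →* (A × Multiplicative Qgrp)) (hf : Function.Injective f)
    (NL : ℕ) (hNL : 0 < NL) :
    ∃ F : Subgroup (A × Multiplicative Qgrp), (F : Set (A × Multiplicative Qgrp)).Finite ∧ (∀ k, f k ∈ F) ∧
      Nat.card ↥F = Nat.card K * NL := by
  classical
  haveI := Fintype.ofFinite K
  set S : Finset (ℕ × ℕ) :=
    Finset.univ.biUnion (fun k : K => (Multiplicative.toAdd (f k).2).support) with hS
  set p₀ : ℕ × ℕ := (NL - 1, (S.sup Prod.snd) + 1) with hp₀def
  have hp₀ : p₀ ∉ S := by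
    intro h
    have h1 : p₀.2 ≤ S.sup Prod.snd := Finset.le_sup h
    simp only [hp₀def] at h1
    omega
  set sEmb : ZMod (NL - 1 + 1) →+ Qgrp := DFinsupp.singleAddHom (fun p => ZMod (p.1 + 1)) p₀
    with hsEmb
  have hsInj : Function.Injective sEmb := by
    intro a b h
    exact DFinsupp.single_injective (i := p₀) h
  set D : AddSubgroup Qgrp := sEmb.range with hD
  have hDcard : Nat.card ↥D = NL := by
    have h1 : Nat.card ↥D = Nat.card (ZMod (NL - 1 + 1)) := by
      refine Nat.card_congr (Equiv.symm ?_)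
      exact Equiv.ofInjective sEmb hsInj
    rw [h1, Nat.card_zmod]
    omega
  have hDsup : ∀ q ∈ D, DFinsupp.support q ⊆ {p₀} := by
    rintro q ⟨z, rfl⟩
    exact DFinsupp.support_single_subset
  -- the subgroup of the multiplicative product
  set Dm : Subgroup (Multiplicative Qgrp) := AddSubgroup.toSubgroup D with hDm
  have hmemDm : ∀ x : Multiplicative Qgrp, x ∈ Dm ↔ Multiplicative.toAdd x ∈ D := by
    intro x; rfl
  set D' : Subgroup (A × Multiplicative Qgrp) := (⊥ : Subgroup A).prod Dm with hD'
  have hcentral : ∀ d ∈ D', ∀ x : A × Multiplicative Qgrp, d * x = x * d := by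
    rintro ⟨d1, d2⟩ ⟨hd1, hd2⟩ x
    have hd1' : d1 = 1 := hd1
    ext : 1
    · show d1 * x.1 = x.1 * d1
      rw [hd1', one_mul, mul_one]
    · show d2 * x.2 = x.2 * d2
      exact mul_comm _ _
  have htriv : ∀ j : K, f j ∈ D' → j = 1 := by
    intro j hj
    have h1 : (f j).1 = 1 := hj.1
    have h2 : Multiplicative.toAdd (f j).2 ∈ D := (hmemDm _).mp hj.2
    have h3 : DFinsupp.support (Multiplicative.toAdd (f j).2) ⊆ {p₀} := hDsup _ h2
    have h4 : DFinsupp.support (Multiplicative.toAdd (f j).2) ⊆ S := by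
      rw [hS]
      exact Finset.subset_biUnion_of_mem
        (fun k : K => DFinsupp.support (Multiplicative.toAdd (f k).2)) (Finset.mem_univ j)
    have h5 : (f j).2 = 1 := by
      apply Multiplicative.toAdd.injective
      ext p
      by_cases hp : p ∈ DFinsupp.support (Multiplicative.toAdd (f j).2)
      · exact absurd (h4 hp) (by
          have := h3 hp
          simp only [Finset.mem_singleton] at this
          rw [this]; exact hp₀)
      · rw [DFinsupp.notMem_support_iff] at hp
        simpa using hp
    apply hf
    have : f j = 1 := by
      ext : 1
      · exact h1
      · exact h5
    rw [this, map_one]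
  haveI hD'fin : Finite ↥D' := by
    haveI : Finite ↥Dm := by
      have : Finite ↥D := Finite.of_injective _
        (Equiv.ofInjective sEmb hsInj).symm.injective
      exact this
    haveI : Subsingleton ↥(⊥ : Subgroup A) := ⟨fun a b => Subtype.ext
      (by rw [Subgroup.mem_bot.mp a.2, Subgroup.mem_bot.mp b.2])⟩
    exact Finite.of_equiv _ (Subgroup.prodEquiv _ _).symm.toEquiv
  have hD'card : Nat.card ↥D' = NL := by
    have h1 : Nat.card ↥D' = Nat.card (↥(⊥ : Subgroup A) × ↥Dm) :=
      Nat.card_congr (Subgroup.prodEquiv _ _).toEquiv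
    have h2 : Nat.card ↥Dm = NL := by
      have : Nat.card ↥Dm = Nat.card ↥D := Nat.card_congr
        ⟨fun x => ⟨Multiplicative.toAdd x.1, (hmemDm _).mp x.2⟩,
         fun x => ⟨Multiplicative.ofAdd x.1, (hmemDm _).mpr x.2⟩,
         fun x => rfl, fun x => rfl⟩
      rw [this, hDcard]
    haveI : Subsingleton ↥(⊥ : Subgroup A) := ⟨fun a b => Subtype.ext
      (by rw [Subgroup.mem_bot.mp a.2, Subgroup.mem_bot.mp b.2])⟩
    rw [h1, Nat.card_prod, Nat.card_of_subsingleton (⟨1, Subgroup.one_mem _⟩ : ↥(⊥ : Subgroup A)),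
      one_mul, h2]
  set F : Subgroup (A × Multiplicative Qgrp) :=
    { carrier := (fun p : K × ↥D' => f p.1 * ↑p.2) '' Set.univ
      one_mem' := ⟨⟨1, 1⟩, trivial, by simp⟩
      mul_mem' := by
        rintro _ _ ⟨⟨k, d⟩, -, rfl⟩ ⟨⟨k', d'⟩, -, rfl⟩
        refine ⟨⟨k * k', d * d'⟩, trivial, ?_⟩
        show f (k * k') * ↑(d * d') = (f k * ↑d) * (f k' * ↑d')
        rw [map_mul]
        have hc := hcentral ↑d d.2 (f k')
        have hgen : ∀ (a b c e : A × Multiplicative Qgrp), b * c = c * b →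
            a * b * (c * e) = a * c * (b * e) := by
          intro a b c e h
          rw [mul_assoc, ← mul_assoc b, h, mul_assoc, ← mul_assoc]
        have hcoe : ((d * d' : ↥D') : A × Multiplicative Qgrp) = ↑d * ↑d' := rfl
        rw [hcoe]
        exact (hgen (f k) ↑d (f k') ↑d' hc).symm
      inv_mem' := by
        rintro _ ⟨⟨k, d⟩, -, rfl⟩
        refine ⟨⟨k⁻¹, d⁻¹⟩, trivial, ?_⟩
        show f k⁻¹ * ↑d⁻¹ = (f k * ↑d)⁻¹
        rw [map_inv, mul_inv_rev]
        exact (hcentral _ (Subgroup.inv_mem _ d.2) _).symm } with hF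
  have hmemF : ∀ x, x ∈ F ↔ ∃ p : K × ↥D', f p.1 * ↑p.2 = x := by
    intro x
    constructor
    · rintro ⟨p, -, rfl⟩; exact ⟨p, rfl⟩
    · rintro ⟨p, rfl⟩; exact ⟨p, trivial, rfl⟩
  have hEquiv : Nonempty (K × ↥D' ≃ ↥F) := by
    refine ⟨Equiv.ofBijective (fun p => ⟨f p.1 * ↑p.2, (hmemF _).mpr ⟨p, rfl⟩⟩) ⟨?_, ?_⟩⟩
    · rintro ⟨k, d⟩ ⟨k', d'⟩ h
      have h1 : f k * ↑d = f k' * ↑d' := congrArg Subtype.val h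
      have h2 : f (k'⁻¹ * k) = ↑d' * (↑d)⁻¹ := by
        rw [map_mul, map_inv]
        have hk : f k = f k' * ↑d' * (↑d)⁻¹ := by rw [← h1]; group
        rw [hk]; group
      have h3 : k'⁻¹ * k = 1 := htriv _ (by
        rw [h2]; exact Subgroup.mul_mem _ d'.2 (Subgroup.inv_mem _ d.2))
      have hk : k = k' := by
        rw [inv_mul_eq_one] at h3; exact h3.symm
      subst hk
      have h4 : (↑d : A × Multiplicative Qgrp) = ↑d' := mul_left_cancel h1
      exact Prod.ext rfl (Subtype.ext h4)
    · rintro ⟨x, hx⟩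
      obtain ⟨p, hp⟩ := (hmemF x).mp hx
      exact ⟨p, Subtype.ext hp⟩
  obtain ⟨E⟩ := hEquiv
  refine ⟨F, ?_, ?_, ?_⟩
  · exact Set.Finite.image _ (Set.finite_univ)
  · intro k
    exact (hmemF _).mpr ⟨⟨k, 1⟩, by simp⟩
  · rw [← Nat.card_congr E, Nat.card_prod, hD'card]

end LFQ

namespace ChainColim

variable {T : ℕ → Type u} [∀ n, Group (T n)] (t : ∀ n, T n →* T (n+1))

lemma into_succ (n : ℕ) (x : T n) : into t (n+1) (t n x) = into t n x := by
  have h : push t (Nat.le_succ n) x = t n x := by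
    rw [push_succ_of_le t (Nat.le_succ n) (le_refl n), push_self]
  rw [← h, into_push]

lemma exists_factor (ht : ∀ n, Function.Injective (t n)) {K : Type*} [Group K]
    (f : K →* Colim t) (n : ℕ) (h : ∀ k, f k ∈ Set.range (into t n)) :
    ∃ f' : K →* T n, ∀ k, into t n (f' k) = f k := by
  choose g hg using h
  refine ⟨{ toFun := g, map_one' := ?_, map_mul' := ?_ }, hg⟩
  · apply into_injective t ht n
    rw [hg, map_one, map_one]
  · intro a b
    apply into_injective t ht n
    rw [map_mul, hg, map_mul, hg, hg]

lemma exists_stage {K : Type*} [Fintype K] (f : K → Colim t) :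
    ∃ n, ∀ k, f k ∈ Set.range (into t n) := by
  choose nf hnf using fun k => mem_range t (f k)
  exact ⟨Finset.univ.sup nf, fun k =>
    range_mono t (Finset.le_sup (Finset.mem_univ k)) (hnf k)⟩

end ChainColim

section Tower

variable (G : Type u) [Group G]

/-- Hall-style tower -/
noncomputable def TT : ℕ → GrpCat.{u}
  | 0 => GrpCat.of G
  | n+1 => GrpCat.of (↥(LF.LFsub ↥(TT n)) × Multiplicative LFQ.Qgrp)

/-- transition maps -/
noncomputable def tmap (n : ℕ) : ↥(TT G n) →* ↥(TT G (n+1)) :=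
  MonoidHom.prod
    ((LF.lmul ↥(TT G n)).codRestrict (LF.LFsub ↥(TT G n)) (LF.lmul_mem_LFsub _)) 1

lemma tmap_injective (n : ℕ) : Function.Injective (tmap G n) := by
  intro a b h
  have h1 := congrArg Prod.fst h
  have h2 := congrArg Subtype.val h1
  exact LF.lmul_injective _ h2

lemma TT_lf (hlf : IsLocallyFiniteGroup G) : ∀ n, IsLocallyFiniteGroup ↥(TT G n)
  | 0 => hlf
  | n+1 => LFQ.prod_lf (LF.isLocallyFinite_LFsub (TT_lf hlf n)) LFQ.qlf

end Tower

section Main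

variable {G : Type u} [Group G]

theorem main_embed (hlf : IsLocallyFiniteGroup G) :
    ∃ (H : GrpCat.{u}), IsExistentiallyClosedLF H ∧
      ∃ emb : G →* H, Function.Injective emb := by
  classical
  let t := tmap G
  have htinj : ∀ n, Function.Injective (t n) := tmap_injective G
  refine ⟨GrpCat.of (ChainColim.Colim t), ⟨?_, ?_⟩, ?_⟩
  · -- local finiteness
    show IsLocallyFiniteGroup (ChainColim.Colim t)
    intro s
    have hst : ∀ x : {x // x ∈ s}, ∃ n,
        (x : ChainColim.Colim t) ∈ Set.range (ChainColim.into t n) :=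
      fun x => ChainColim.mem_range t x
    choose nf hnf using hst
    set n := s.attach.sup nf with hn
    have hmem : ∀ x : {x // x ∈ s}, (x : ChainColim.Colim t) ∈ Set.range (ChainColim.into t n) :=
      fun x => ChainColim.range_mono t (Finset.le_sup (Finset.mem_attach _ x)) (hnf x)
    choose g hg using hmem
    set s' : Finset ↥(TT G n) := s.attach.image g with hs'
    have hle : Subgroup.closure (s : Set (ChainColim.Colim t)) ≤
        (Subgroup.closure ((s' : Finset ↥(TT G n)) : Set ↥(TT G n))).map (ChainColim.into t n) := by
      apply (Subgroup.closure_le _).mpr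
      intro x hx
      refine Subgroup.mem_map.mpr ⟨g ⟨x, hx⟩, Subgroup.subset_closure ?_, hg ⟨x, hx⟩⟩
      rw [hs']
      exact Finset.mem_coe.mpr (Finset.mem_image_of_mem _ (Finset.mem_attach _ _))
    have hfin : (((Subgroup.closure ((s' : Finset ↥(TT G n)) : Set ↥(TT G n))).map
        (ChainColim.into t n)) : Set (ChainColim.Colim t)).Finite := by
      rw [Subgroup.coe_map]
      exact ((TT_lf G hlf n) s').image _
    exact hfin.subset hle
  · -- existential closedness
    show ∀ (K L : Type) [Group K] [Group L] [Finite L] (i : K →* L),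
      Function.Injective i →
      ∀ f : K →* ChainColim.Colim t, Function.Injective f →
        ∃ g : L →* ChainColim.Colim t, Function.Injective g ∧ ∀ x, g (i x) = f x
    intro K L _ _ _ i hi f hf
    haveI : Finite K := Finite.of_injective i hi
    haveI := Fintype.ofFinite K
    obtain ⟨n₀, hn₀⟩ := ChainColim.exists_stage t f
    obtain ⟨f₀, hf₀⟩ := ChainColim.exists_factor t htinj f n₀ hn₀
    set m := n₀ + 1 with hm
    set f₁ : K →* ↥(TT G m) := (t n₀).comp f₀ with hf₁
    have hf₁into : ∀ k, ChainColim.into t m (f₁ k) = f k := by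
      intro k
      show ChainColim.into t (n₀ + 1) (t n₀ (f₀ k)) = f k
      rw [ChainColim.into_succ]
      exact hf₀ k
    have hf₁inj : Function.Injective f₁ := by
      intro a b h
      apply hf
      rw [← hf₁into a, ← hf₁into b, h]
    have hNL : 0 < Nat.card L := Nat.card_pos
    obtain ⟨F, hFfin, hFmem, hFcard⟩ := LFQ.envelope
      (A := ↥(LF.LFsub ↥(TT G n₀)))
      (f₁ : K →* (↥(LF.LFsub ↥(TT G n₀)) × Multiplicative LFQ.Qgrp)) hf₁inj (Nat.card L) hNL
    obtain ⟨ψ, hψinj, hψ⟩ := LF.step_ext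
      (N := ↥(LF.LFsub ↥(TT G n₀)) × Multiplicative LFQ.Qgrp) i hi
      (f₁ : K →* (↥(LF.LFsub ↥(TT G n₀)) × Multiplicative LFQ.Qgrp)) hf₁inj F hFfin hFmem
      (by rw [hFcard]; exact dvd_mul_left _ _)
    set inj2 : ↥(LF.LFsub ↥(TT G m)) →* ↥(TT G (m+1)) :=
      MonoidHom.prod (MonoidHom.id _) 1 with hinj2
    set gg : L →* ChainColim.Colim t := (ChainColim.into t (m+1)).comp (inj2.comp ψ) with hgg
    refine ⟨gg, ?_, ?_⟩
    · intro a b h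
      apply hψinj
      have h1 : inj2 (ψ a) = inj2 (ψ b) :=
        ChainColim.into_injective t htinj (m+1) h
      have h2 := congrArg Prod.fst h1
      exact h2
    · intro k
      have h1 : inj2 (ψ (i k)) = t m (f₁ k) := by
        have hfst : (inj2 (ψ (i k))).1 = (t m (f₁ k)).1 := Subtype.ext (hψ k)
        have hsnd : (inj2 (ψ (i k))).2 = (t m (f₁ k)).2 := rfl
        exact Prod.ext hfst hsnd
      show ChainColim.into t (m+1) (inj2 (ψ (i k))) = f k
      rw [h1, ChainColim.into_succ]
      exact hf₁into k
  · show ∃ emb : G →* ChainColim.Colim t, Function.Injective emb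
    exact ⟨ChainColim.into t 0, ChainColim.into_injective t htinj 0⟩

end Main

/-- Every locally finite group embeds into an existentially closed locally
finite group. -/
theorem stmt2 {G : Type u} [Group G] (hlf : IsLocallyFiniteGroup G) :
    ∃ (H : GrpCat.{u}), IsExistentiallyClosedLF H ∧
      ∃ emb : G →* H, Function.Injective emb := by
  exact main_embed hlf
end

section
/- Any two countable existentially closed locally finite groups are isomorphic. -/
universe u v

section AuxEC

/-- The EC property, stated for finite groups in an arbitrary universe. -/
lemma ec_extend {H : Type v} [Group H] (hH : IsExistentiallyClosedLF H)
    {K L : Type u} [Group K] [Group L] [Finite L]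
    (i : K →* L) (hi : Function.Injective i)
    (f : K →* H) (hf : Function.Injective f) :
    ∃ g : L →* H, Function.Injective g ∧ ∀ x, g (i x) = f x := by
  haveI : Finite K := Finite.of_injective i hi
  haveI : Small.{0} K := Countable.toSmall K
  haveI : Small.{0} L := Countable.toSmall L
  haveI : Finite (Shrink.{0} L) := Finite.of_equiv L (equivShrink L)
  let ψK : Shrink.{0} K ≃* K := Shrink.mulEquiv
  let ψL : Shrink.{0} L ≃* L := Shrink.mulEquiv
  let i' : Shrink.{0} K →* Shrink.{0} L :=
    ψL.symm.toMonoidHom.comp (i.comp ψK.toMonoidHom)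
  have hi' : Function.Injective i' :=
    ψL.symm.injective.comp (hi.comp ψK.injective)
  let f' : Shrink.{0} K →* H := f.comp ψK.toMonoidHom
  have hf' : Function.Injective f' := hf.comp ψK.injective
  obtain ⟨g', hg', hcomm⟩ := hH.2 _ _ i' hi' f' hf'
  refine ⟨g'.comp ψL.symm.toMonoidHom, hg'.comp ψL.symm.injective, fun x => ?_⟩
  have h1 : ψL.symm (i x) = i' (ψK.symm x) := by
    simp [i', MonoidHom.comp_apply]
  calc g'.comp ψL.symm.toMonoidHom (i x) = g' (ψL.symm (i x)) := rfl
    _ = g' (i' (ψK.symm x)) := by rw [h1]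
    _ = f' (ψK.symm x) := hcomm _
    _ = f x := by simp [f']

end AuxEC

/-- A partial isomorphism: an isomorphism between a finite subgroup of `G`
and a subgroup of `H`. -/
structure PIso (G : Type u) (H : Type v) [Group G] [Group H] where
  A : Subgroup G
  B : Subgroup H
  finA : (A : Set G).Finite
  e : A ≃* B

namespace PIso

variable {G : Type u} {H : Type v} [Group G] [Group H]

/-- Extension order on partial isomorphisms. -/
def Le (p q : PIso G H) : Prop :=
  ∃ h : p.A ≤ q.A, ∀ x : p.A, (q.e (Subgroup.inclusion h x) : H) = p.e x

lemma Le.refl (p : PIso G H) : p.Le p := by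
  refine ⟨le_refl _, fun x => ?_⟩
  have h : Subgroup.inclusion (le_refl p.A) x = x := Subtype.ext (Eq.refl _)
  rw [h]

lemma Le.trans {p q r : PIso G H} (h1 : p.Le q) (h2 : q.Le r) : p.Le r := by
  obtain ⟨hA1, hag1⟩ := h1
  obtain ⟨hA2, hag2⟩ := h2
  refine ⟨hA1.trans hA2, fun x => ?_⟩
  have : Subgroup.inclusion (hA1.trans hA2) x
      = Subgroup.inclusion hA2 (Subgroup.inclusion hA1 x) := Subtype.ext (Eq.refl _)
  rw [this, hag2, hag1]

lemma finB (p : PIso G H) : (p.B : Set H).Finite := by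
  haveI : Finite p.A := p.finA.to_subtype
  haveI : Finite p.B := Finite.of_equiv _ p.e.toEquiv
  exact Set.toFinite _

/-- Flip a partial isomorphism. -/
def symm (p : PIso G H) : PIso H G := ⟨p.B, p.A, p.finB, p.e.symm⟩

@[simp] lemma symm_A (p : PIso G H) : p.symm.A = p.B := rfl
@[simp] lemma symm_e (p : PIso G H) : p.symm.e = p.e.symm := rfl

lemma symm_symm (p : PIso G H) : p.symm.symm = p := by
  cases p; rfl

lemma Le.symm {p q : PIso G H} (h : p.Le q) : p.symm.Le q.symm := by
  obtain ⟨hA, hag⟩ := h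
  have hB : p.B ≤ q.B := by
    intro y hy
    obtain ⟨a, ha⟩ := p.e.surjective ⟨y, hy⟩
    have h1 : ((q.e (Subgroup.inclusion hA a)) : H) = y := by
      rw [hag a, ha]
    exact h1 ▸ (q.e (Subgroup.inclusion hA a)).2
  refine ⟨hB, fun y => ?_⟩
  obtain ⟨a, ha⟩ := p.e.surjective y
  have key : Subgroup.inclusion hB y = q.e (Subgroup.inclusion hA a) := by
    apply Subtype.ext
    rw [hag a, ha]
    rfl
  show ((q.e.symm (Subgroup.inclusion hB y)) : G) = ((p.e.symm y) : G)
  rw [key, MulEquiv.symm_apply_apply, ← ha, MulEquiv.symm_apply_apply,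
    Subgroup.coe_inclusion]

/-- The key extension step: any partial isomorphism extends to one whose
domain contains a prescribed element. -/
lemma extend (hGl : IsLocallyFiniteGroup G) (hH : IsExistentiallyClosedLF H)
    (p : PIso G H) (x : G) : ∃ q : PIso G H, p.Le q ∧ x ∈ q.A := by
  have hfin : ((p.A : Set G) ∪ {x}).Finite := p.finA.union (Set.finite_singleton x)
  set A' : Subgroup G := Subgroup.closure ((p.A : Set G) ∪ {x}) with hA'
  have hA'fin : (A' : Set G).Finite := by
    have := hGl hfin.toFinset
    rwa [Set.Finite.coe_toFinset] at this
  have hle : p.A ≤ A' := fun a ha => Subgroup.subset_closure (Or.inl ha)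
  haveI : Finite A' := hA'fin.to_subtype
  have hi : Function.Injective (Subgroup.inclusion hle) :=
    Subgroup.inclusion_injective hle
  let f : p.A →* H := p.B.subtype.comp p.e.toMonoidHom
  have hf : Function.Injective f := p.B.subtype_injective.comp p.e.injective
  obtain ⟨g, hg, hcomm⟩ := ec_extend hH (Subgroup.inclusion hle) hi f hf
  refine ⟨⟨A', g.range, hA'fin, MonoidHom.ofInjective hg⟩,
    ⟨hle, fun a => ?_⟩, Subgroup.subset_closure (Or.inr rfl)⟩
  show ((MonoidHom.ofInjective hg (Subgroup.inclusion hle a)) : H) = _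
  rw [MonoidHom.ofInjective_apply]
  exact hcomm a

lemma extendB (hG : IsExistentiallyClosedLF G) (hHl : IsLocallyFiniteGroup H)
    (p : PIso G H) (y : H) : ∃ q : PIso G H, p.Le q ∧ y ∈ q.B := by
  obtain ⟨q', hle, hy⟩ := extend hHl hG p.symm y
  refine ⟨q'.symm, ?_, hy⟩
  have := hle.symm
  rwa [symm_symm] at this

end PIso

/-- Any two countable existentially closed locally finite groups are isomorphic. -/
theorem stmt9 {G : Type u} {H : Type v} [Group G] [Group H]
    [Countable G] [Countable H]
    (hG : IsExistentiallyClosedLF G) (hH : IsExistentiallyClosedLF H) :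
    Nonempty (G ≃* H) := by
  obtain ⟨fG, hfG⟩ := exists_surjective_nat G
  obtain ⟨fH, hfH⟩ := exists_surjective_nat H
  -- base partial isomorphism between trivial subgroups
  let p0 : PIso G H :=
    ⟨⊥, ⊥, by rw [Subgroup.coe_bot]; exact Set.finite_singleton _,
      MulEquiv.ofUnique⟩
  -- the step
  have step : ∀ (p : PIso G H) (n : ℕ),
      ∃ q : PIso G H, p.Le q ∧ fG n ∈ q.A ∧ fH n ∈ q.B := by
    intro p n
    obtain ⟨q1, h1, hx⟩ := PIso.extend hG.1 hH p (fG n)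
    obtain ⟨q2, h2, hy⟩ := PIso.extendB hG hH.1 q1 (fH n)
    exact ⟨q2, h1.trans h2, h2.choose hx, hy⟩
  -- the chain
  let c : ℕ → PIso G H := fun n => Nat.rec p0 (fun n p => (step p n).choose) n
  have hc1 : ∀ n, (c n).Le (c (n+1)) := fun n => (step (c n) n).choose_spec.1
  have hcG : ∀ n, fG n ∈ (c (n+1)).A := fun n => (step (c n) n).choose_spec.2.1
  have hcH : ∀ n, fH n ∈ (c (n+1)).B := fun n => (step (c n) n).choose_spec.2.2
  have hmono : ∀ {m n : ℕ}, m ≤ n → (c m).Le (c n) := by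
    intro m n h
    induction h with
    | refl => exact PIso.Le.refl _
    | step _ ih => exact ih.trans (hc1 _)
  -- totality
  have memA : ∀ x : G, ∃ n, x ∈ (c n).A := by
    intro x; obtain ⟨n, rfl⟩ := hfG x; exact ⟨n + 1, hcG n⟩
  have memB : ∀ y : H, ∃ n, y ∈ (c n).B := by
    intro y; obtain ⟨n, rfl⟩ := hfH y; exact ⟨n + 1, hcH n⟩
  -- coherence
  have cohA : ∀ m n (x : G) (hm : x ∈ (c m).A) (hn : x ∈ (c n).A),
      (((c m).e ⟨x, hm⟩ : (c m).B) : H) = (((c n).e ⟨x, hn⟩ : (c n).B) : H) := by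
    have key : ∀ m n, m ≤ n → ∀ (x : G) (hm : x ∈ (c m).A) (hn : x ∈ (c n).A),
        (((c m).e ⟨x, hm⟩ : (c m).B) : H) = (((c n).e ⟨x, hn⟩ : (c n).B) : H) := by
      intro m n h x hm hn
      obtain ⟨hA, hag⟩ := hmono h
      have : (⟨x, hn⟩ : (c n).A) = Subgroup.inclusion hA ⟨x, hm⟩ := Subtype.ext (Eq.refl _)
      rw [this, hag]
    intro m n x hm hn
    rcases le_total m n with h | h
    · exact key m n h x hm hn
    · exact (key n m h x hn hm).symm
  have cohB : ∀ m n (y : H) (hm : y ∈ (c m).B) (hn : y ∈ (c n).B),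
      (((c m).e.symm ⟨y, hm⟩ : (c m).A) : G) = (((c n).e.symm ⟨y, hn⟩ : (c n).A) : G) := by
    have key : ∀ m n, m ≤ n → ∀ (y : H) (hm : y ∈ (c m).B) (hn : y ∈ (c n).B),
        (((c m).e.symm ⟨y, hm⟩ : (c m).A) : G) = (((c n).e.symm ⟨y, hn⟩ : (c n).A) : G) := by
      intro m n h y hm hn
      obtain ⟨hA, hag⟩ := (hmono h).symm
      have : (⟨y, hn⟩ : (c n).symm.A) = Subgroup.inclusion hA ⟨y, hm⟩ := Subtype.ext (Eq.refl _)
      have h2 := hag ⟨y, hm⟩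
      rw [← this] at h2
      exact h2.symm
    intro m n y hm hn
    rcases le_total m n with h | h
    · exact key m n h y hm hn
    · exact (key n m h y hn hm).symm
  -- the maps
  let F : G → H := fun x => (((c (memA x).choose).e ⟨x, (memA x).choose_spec⟩ :
    (c (memA x).choose).B) : H)
  let Finv : H → G := fun y => (((c (memB y).choose).e.symm ⟨y, (memB y).choose_spec⟩ :
    (c (memB y).choose).A) : G)
  have hF : ∀ n (x : G) (hx : x ∈ (c n).A), F x = (((c n).e ⟨x, hx⟩ : (c n).B) : H) :=
    fun n x hx => cohA _ n x _ hx
  have hFinv : ∀ n (y : H) (hy : y ∈ (c n).B),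
      Finv y = (((c n).e.symm ⟨y, hy⟩ : (c n).A) : G) :=
    fun n y hy => cohB _ n y _ hy
  have hleft : Function.LeftInverse Finv F := by
    intro x
    obtain ⟨n, hx⟩ := memA x
    have hFx : F x = (((c n).e ⟨x, hx⟩ : (c n).B) : H) := hF n x hx
    have hmem : F x ∈ (c n).B := hFx ▸ ((c n).e ⟨x, hx⟩).2
    rw [hFinv n (F x) hmem]
    have : (⟨F x, hmem⟩ : (c n).B) = (c n).e ⟨x, hx⟩ := Subtype.ext hFx
    rw [this, MulEquiv.symm_apply_apply]
  have hright : Function.RightInverse Finv F := by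
    intro y
    obtain ⟨n, hy⟩ := memB y
    have hFy : Finv y = (((c n).e.symm ⟨y, hy⟩ : (c n).A) : G) := hFinv n y hy
    have hmem : Finv y ∈ (c n).A := hFy ▸ ((c n).e.symm ⟨y, hy⟩).2
    rw [hF n (Finv y) hmem]
    have : (⟨Finv y, hmem⟩ : (c n).A) = (c n).e.symm ⟨y, hy⟩ := Subtype.ext hFy
    rw [this, MulEquiv.apply_symm_apply]
  have hmul : ∀ x y : G, F (x * y) = F x * F y := by
    intro x y
    obtain ⟨nx, hx0⟩ := memA x
    obtain ⟨ny, hy0⟩ := memA y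
    set n := max nx ny with hn
    have hx : x ∈ (c n).A := (hmono (le_max_left nx ny)).choose hx0
    have hy : y ∈ (c n).A := (hmono (le_max_right nx ny)).choose hy0
    have hxy : x * y ∈ (c n).A := mul_mem hx hy
    rw [hF n _ hxy, hF n x hx, hF n y hy]
    have : (⟨x * y, hxy⟩ : (c n).A) = ⟨x, hx⟩ * ⟨y, hy⟩ := Subtype.ext (Eq.refl _)
    rw [this, map_mul]
    rfl
  exact ⟨{ toFun := F, invFun := Finv, left_inv := hleft, right_inv := hright,
           map_mul' := hmul }⟩
end

section
/- For every locally finite group G there exists an extension G ⊆ G⁺ of locally finite groups and an element a ∈ G⁺ such that: a has order 2, a does not commute with any b ∈ G other than the identity, the subgroups G and a⁻¹Ga of G⁺ commute elementwise, and G⁺ is generated by G ∪ {a}. -/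
universe u

section aux

open SemidirectProduct

variable {G : Type u} [Group G]

open Classical in
lemma lf_prod (h : IsLocallyFiniteGroup G) : IsLocallyFiniteGroup (G × G) := by
  intro s
  set s₁ := s.image Prod.fst with hs₁
  set s₂ := s.image Prod.snd with hs₂
  have h₁ := h s₁
  have h₂ := h s₂
  have hle : Subgroup.closure (s : Set (G × G)) ≤
      (Subgroup.closure (s₁ : Set G)).prod (Subgroup.closure (s₂ : Set G)) := by
    rw [Subgroup.closure_le]
    intro x hx
    refine Subgroup.mem_prod.2 ⟨Subgroup.subset_closure ?_, Subgroup.subset_closure ?_⟩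
    · exact Finset.mem_coe.2 (hs₁ ▸ Finset.mem_image_of_mem Prod.fst hx)
    · exact Finset.mem_coe.2 (hs₂ ▸ Finset.mem_image_of_mem Prod.snd hx)
  refine Set.Finite.subset ((h₁.prod h₂).subset ?_) hle
  rw [← Subgroup.coe_prod]

/-- the swap automorphism -/
def sw : MulAut (G × G) := MulEquiv.prodComm

lemma sw_apply (p : G × G) : (sw p : G × G) = (p.2, p.1) := rfl

lemma sw_sq : (sw : MulAut (G × G)) ^ 2 = 1 := by
  ext p <;> rfl

def φ : Multiplicative (ZMod 2) →* MulAut (G × G) where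
  toFun x := sw ^ (Multiplicative.toAdd x).val
  map_one' := by rfl
  map_mul' x y := by
    show sw ^ ((Multiplicative.toAdd x + Multiplicative.toAdd y).val) = _
    rw [ZMod.val_add, ← pow_eq_pow_mod _ sw_sq, pow_add]

lemma φ_apply_mem (N : Subgroup (G × G)) (hN : ∀ p ∈ N, (sw p : G × G) ∈ N)
    (ε : Multiplicative (ZMod 2)) {p : G × G} (hp : p ∈ N) : φ ε p ∈ N := by
  show (sw ^ (Multiplicative.toAdd ε).val) p ∈ N
  have hlt : (Multiplicative.toAdd ε).val < 2 := ZMod.val_lt _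
  interval_cases h : (Multiplicative.toAdd ε).val
  · simpa using hp
  · rw [pow_one]; exact hN p hp

lemma φ_ofAdd_one : (φ (Multiplicative.ofAdd (1 : ZMod 2)) : MulAut (G × G)) = sw := by
  show sw ^ (Multiplicative.toAdd (Multiplicative.ofAdd (1 : ZMod 2))).val = sw
  have : (Multiplicative.toAdd (Multiplicative.ofAdd (1 : ZMod 2))).val = 1 := rfl
  rw [this, pow_one]

open Classical in
lemma lf_sd (h : IsLocallyFiniteGroup G) :
    IsLocallyFiniteGroup ((G × G) ⋊[φ] Multiplicative (ZMod 2)) := by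
  intro s
  set T₀ : Finset (G × G) := s.image SemidirectProduct.left with hT₀
  set T : Finset (G × G) := T₀ ∪ T₀.image (fun p => (p.2, p.1)) with hT
  set N := Subgroup.closure (T : Set (G × G)) with hNdef
  have hNfin : (N : Set (G × G)).Finite := lf_prod h T
  have hsw : ∀ p ∈ N, (sw p : G × G) ∈ N := by
    intro p hp
    refine Subgroup.closure_induction (fun t ht => ?_)
      (by simpa using N.one_mem)
      (fun a b _ _ ha hb => by rw [map_mul]; exact N.mul_mem ha hb)
      (fun a _ ha => by rw [map_inv]; exact N.inv_mem ha) hp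
    apply Subgroup.subset_closure
    rcases Finset.mem_union.1 ht with h' | h'
    · exact Finset.mem_coe.2 (Finset.mem_union.2 (Or.inr (Finset.mem_image_of_mem _ h')))
    · obtain ⟨q, hq, rfl⟩ := Finset.mem_image.1 h'
      exact Finset.mem_coe.2 (Finset.mem_union.2 (Or.inl hq))
  set K : Subgroup ((G × G) ⋊[φ] Multiplicative (ZMod 2)) :=
    { carrier := {x | x.left ∈ N}
      one_mem' := by simpa using N.one_mem
      mul_mem' := by
        intro x y hx hy
        show (x * y).left ∈ N
        rw [SemidirectProduct.mul_left]
        exact N.mul_mem hx (φ_apply_mem N hsw _ hy)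
      inv_mem' := by
        intro x hx
        show x⁻¹.left ∈ N
        rw [SemidirectProduct.inv_left]
        exact φ_apply_mem N hsw _ (N.inv_mem hx) } with hK
  have hKfin : (K : Set ((G × G) ⋊[φ] Multiplicative (ZMod 2))).Finite := by
    refine Set.Finite.subset ((hNfin.prod Set.finite_univ).image
      (fun q : (G × G) × Multiplicative (ZMod 2) => (⟨q.1, q.2⟩ : (G × G) ⋊[φ] _))) ?_
    intro x hx
    exact ⟨(x.left, x.right), ⟨hx, trivial⟩, rfl⟩
  have hle : Subgroup.closure (s : Set ((G × G) ⋊[φ] Multiplicative (ZMod 2))) ≤ K := by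
    rw [Subgroup.closure_le]
    intro x hx
    show x.left ∈ N
    exact Subgroup.subset_closure
      (Finset.mem_coe.2 (Finset.mem_union.2 (Or.inl (Finset.mem_image_of_mem _ hx))))
  exact hKfin.subset hle

end aux

/-- For every locally finite group `G` there is a locally finite extension
`G ⊆ G⁺` and an element `a ∈ G⁺` of order `2` commuting with no nontrivial
element of `G`, such that `G` and `a⁻¹Ga` commute elementwise and `G⁺` is
generated by `G ∪ {a}`. -/
theorem stmt10 {G : Type u} [Group G] (hlf : IsLocallyFiniteGroup G) :
    ∃ (H : GrpCat.{u}) (e : G →* H) (a : H),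
      Function.Injective e ∧ IsLocallyFiniteGroup H ∧
      a ≠ 1 ∧ a * a = 1 ∧
      (∀ b : G, b ≠ 1 → ¬ Commute a (e b)) ∧
      (∀ g h : G, Commute (e g) (a⁻¹ * e h * a)) ∧
      Subgroup.closure (Set.range e ∪ {a}) = (⊤ : Subgroup H) := by
  classical
  let H0 := (G × G) ⋊[φ] Multiplicative (ZMod 2)
  let e0 : G →* H0 := SemidirectProduct.inl.comp (MonoidHom.inl G G)
  let a0 : H0 := SemidirectProduct.inr (Multiplicative.ofAdd (1 : ZMod 2))
  have key : ∀ h : G, a0⁻¹ * e0 h * a0 = SemidirectProduct.inl ((1 : G), h) := by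
    intro h
    have h1 : e0 h = SemidirectProduct.inl ((h, 1) : G × G) := rfl
    have h2 : a0⁻¹ = SemidirectProduct.inr (Multiplicative.ofAdd (1 : ZMod 2))⁻¹ := by
      show (SemidirectProduct.inr (Multiplicative.ofAdd (1 : ZMod 2)))⁻¹ = _
      rw [← map_inv]
    rw [h1, h2]
    show _ * SemidirectProduct.inr (Multiplicative.ofAdd (1 : ZMod 2)) = _
    rw [← SemidirectProduct.inl_aut_inv, φ_ofAdd_one]
    rfl
  have hinj : Function.Injective e0 :=
    SemidirectProduct.inl_injective.comp (fun x y hxy => congrArg Prod.fst hxy)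
  have hne1 : a0 ≠ 1 := by
    intro hcontra
    have := congrArg SemidirectProduct.right hcontra
    have h2 : Multiplicative.ofAdd (1 : ZMod 2) = 1 := this
    exact absurd h2 (by decide)
  have hsq : a0 * a0 = 1 := by
    show SemidirectProduct.inr _ * SemidirectProduct.inr _ = 1
    rw [← map_mul]
    have : Multiplicative.ofAdd (1 : ZMod 2) * Multiplicative.ofAdd 1 = 1 := by decide
    rw [this, map_one]
  have hnc : ∀ b : G, b ≠ 1 → ¬ Commute a0 (e0 b) := by
    intro b hb hcomm
    have h1 := congrArg SemidirectProduct.left hcomm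
    rw [SemidirectProduct.mul_left, SemidirectProduct.mul_left] at h1
    have l1 : a0.left = 1 := rfl
    have r1 : a0.right = Multiplicative.ofAdd (1 : ZMod 2) := rfl
    have l2 : (e0 b).left = ((b, 1) : G × G) := rfl
    have r2 : (e0 b).right = 1 := rfl
    rw [l1, r1, l2, r2, φ_ofAdd_one, map_one] at h1
    simp only [one_mul, MulAut.one_apply, mul_one, sw_apply, Prod.mk.injEq] at h1
    exact hb h1.1.symm
  have hcm : ∀ g h : G, Commute (e0 g) (a0⁻¹ * e0 h * a0) := by
    intro g h
    rw [key h]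
    show e0 g * _ = _ * e0 g
    have hg : e0 g = SemidirectProduct.inl ((g, 1) : G × G) := rfl
    rw [hg, ← map_mul, ← map_mul]
    congr 1
    simp [Prod.ext_iff]
  have htop : Subgroup.closure (Set.range e0 ∪ {a0}) = (⊤ : Subgroup H0) := by
    rw [eq_top_iff]
    intro x _
    set C := Subgroup.closure (Set.range e0 ∪ {a0}) with hC
    have ha0C : a0 ∈ C := Subgroup.subset_closure (Or.inr rfl)
    have heC : ∀ g : G, e0 g ∈ C := fun g => Subgroup.subset_closure (Or.inl ⟨g, rfl⟩)
    have hinl1 : ∀ h : G, SemidirectProduct.inl ((1 : G), h) ∈ C := by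
      intro h
      rw [← key h]
      exact C.mul_mem (C.mul_mem (C.inv_mem ha0C) (heC h)) ha0C
    have hinl : ∀ p : G × G, SemidirectProduct.inl (φ := φ) p ∈ C := by
      intro p
      have : SemidirectProduct.inl (φ := φ) p =
          e0 p.1 * SemidirectProduct.inl ((1 : G), p.2) := by
        show _ = SemidirectProduct.inl ((p.1, 1) : G × G) * _
        rw [← map_mul]
        congr 1
        simp [Prod.ext_iff]
      rw [this]
      exact C.mul_mem (heC p.1) (hinl1 p.2)
    have hinr : ∀ ε : Multiplicative (ZMod 2), SemidirectProduct.inr (φ := φ) ε ∈ C := by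
      intro ε
      rcases (by decide : ∀ ε : Multiplicative (ZMod 2),
          ε = 1 ∨ ε = Multiplicative.ofAdd 1) ε with h | h
      · rw [h, map_one]; exact C.one_mem
      · rw [h]; exact ha0C
    have hx : x = SemidirectProduct.inl x.left * SemidirectProduct.inr x.right :=
      (SemidirectProduct.inl_left_mul_inr_right x).symm
    rw [hx]
    exact C.mul_mem (hinl x.left) (hinr x.right)
  exact ⟨GrpCat.of H0, e0, a0, hinj, lf_sd hlf, hne1, hsq, hnc, hcm, htop⟩
end

section
/- Every existentially closed locally finite group has trivial center. -/
universe u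

/-- Every existentially closed locally finite group has trivial center. -/
theorem stmt11 {H : Type u} [Group H] (hH : IsExistentiallyClosedLF H) :
    Subgroup.center H = ⊥ := by
  rw [eq_bot_iff]
  intro z hz
  simp only [Subgroup.mem_bot]
  by_contra hz1
  have hfin : (Subgroup.closure (({z} : Finset H) : Set H) : Set H).Finite := hH.1 {z}
  rw [Finset.coe_singleton] at hfin
  set K : Subgroup H := Subgroup.closure ({z} : Set H) with hK
  haveI : Finite ↥K := hfin.to_subtype
  haveI : Small.{0} ↥K := inferInstance
  let K0 : Type := Shrink.{0} ↥K
  let e : K0 ≃* ↥K := Shrink.mulEquiv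
  let i : K0 →* Equiv.Perm (K0 × Bool) :=
    MonoidHom.mk' (fun k => Equiv.prodCongr (Equiv.mulLeft k) (Equiv.refl Bool)) (by
      intro a b
      ext p <;> simp [mul_assoc])
  have iinj : Function.Injective i := by
    intro a b hab
    have := congrArg (fun σ => (σ ((1 : K0), false)).1) hab
    simpa [i] using this
  let f : K0 →* H := K.subtype.comp e.toMonoidHom
  have finj : Function.Injective f := K.subtype_injective.comp e.injective
  obtain ⟨g, ginj, hg⟩ := hH.2 K0 (Equiv.Perm (K0 × Bool)) i iinj f finj
  have hzK : z ∈ K := Subgroup.subset_closure rfl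
  let k0 : K0 := e.symm ⟨z, hzK⟩
  have hk0 : f k0 = z := by simp [f, k0]
  have hk0ne : k0 ≠ 1 := by
    intro h
    apply hz1
    rw [← hk0, h, map_one]
  haveI : DecidableEq (K0 × Bool) := Classical.decEq _
  let w : Equiv.Perm (K0 × Bool) := Equiv.swap ((1 : K0), false) ((1 : K0), true)
  have hne : i k0 * w ≠ w * i k0 := by
    intro h
    have h2 := congrArg (fun σ => σ ((1 : K0), false)) h
    simp only [Equiv.Perm.mul_apply] at h2
    have hw1 : w ((1 : K0), false) = ((1 : K0), true) := by simp only [w]; exact Equiv.swap_apply_left _ _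
    have hik : ∀ p : K0 × Bool, (i k0) p = (k0 * p.1, p.2) := fun p => rfl
    rw [hw1] at h2
    have hwfix : w ((k0 : K0), false) = ((k0 : K0), false) := by
      simp only [w]
      apply Equiv.swap_apply_of_ne_of_ne
      · intro hc; exact hk0ne (by simpa using congrArg Prod.fst hc)
      · intro hc; exact Bool.noConfusion (congrArg Prod.snd hc)
    rw [hik, hik] at h2
    simp only [mul_one] at h2
    rw [hwfix] at h2
    exact Bool.noConfusion (congrArg Prod.snd h2)
  apply hne
  apply ginj
  rw [map_mul, map_mul, hg k0, hk0]
  exact ((Subgroup.mem_center_iff.mp hz (g w))).symm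
end

section
/- Let G be a locally finite group, n ≥ 1, U = G × {0,…,n−1}. For ā = (a₀,…,a_{n−1}) ∈ Gⁿ and a permutation π of {0,…,n−1}, define h_{ā,π} : U → U by h_{ā,π}(g,ι) = (g·a_ι, π(ι)). Then each h_{ā,π} is a permutation of U, and the subgroup H of Perm(U) generated by all such h_{ā,π} is locally finite. -/
universe u

section Aux

variable {G : Type u} [Group G] {n : ℕ}

/-- The permutation `(g, ι) ↦ (g * a ι, π ι)` of `G × Fin n`. -/
def hdef (a : Fin n → G) (π : Equiv.Perm (Fin n)) : Equiv.Perm (G × Fin n) where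
  toFun p := (p.1 * a p.2, π p.2)
  invFun p := (p.1 * (a (π.symm p.2))⁻¹, π.symm p.2)
  left_inv p := by simp
  right_inv p := by simp

@[simp] theorem hdef_apply (a : Fin n → G) (π : Equiv.Perm (Fin n)) (g : G) (ι : Fin n) :
    hdef a π (g, ι) = (g * a ι, π ι) := rfl

theorem hdef_mul (a b : Fin n → G) (π σ : Equiv.Perm (Fin n)) :
    hdef a π * hdef b σ = hdef (fun ι => b ι * a (σ ι)) (π * σ) := by
  ext p
  · simp [hdef, mul_assoc]
  · simp [hdef]

theorem hdef_one : hdef (fun _ => (1 : G)) (1 : Equiv.Perm (Fin n)) = 1 := by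
  ext p <;> simp [hdef]

theorem hdef_inv (a : Fin n → G) (π : Equiv.Perm (Fin n)) :
    (hdef a π)⁻¹ = hdef (fun ι => (a (π⁻¹ ι))⁻¹) π⁻¹ := by
  symm
  apply eq_inv_of_mul_eq_one_right
  rw [hdef_mul]
  simp [hdef_one]

theorem hdef_inj {a b : Fin n → G} {π σ : Equiv.Perm (Fin n)}
    (h : hdef a π = hdef b σ) : a = b ∧ π = σ := by
  constructor
  · funext i
    have := congrArg (fun f : Equiv.Perm (G × Fin n) => (f (1, i)).1) h
    simpa using this
  · apply Equiv.ext
    intro i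
    have := congrArg (fun f : Equiv.Perm (G × Fin n) => (f (1, i)).2) h
    simpa using this

end Aux

/-- Let `G` be a locally finite group, `n ≥ 1` and `U = G × Fin n`.  For
`a : Fin n → G` and a permutation `π` of `Fin n`, the map
`(g, ι) ↦ (g * a ι, π ι)` is a permutation `h a π` of `U`, and the subgroup
of `Perm U` generated by all such permutations is locally finite. -/
theorem stmt12 {G : Type u} [Group G] (hlf : IsLocallyFiniteGroup G)
    (n : ℕ) (hn : 1 ≤ n) :
    ∃ h : (Fin n → G) → Equiv.Perm (Fin n) → Equiv.Perm (G × Fin n),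
      (∀ (a : Fin n → G) (π : Equiv.Perm (Fin n)) (g : G) (ι : Fin n),
          h a π (g, ι) = (g * a ι, π ι)) ∧
      IsLocallyFiniteGroup
        ↥(Subgroup.closure {f : Equiv.Perm (G × Fin n) | ∃ a π, f = h a π}) := by
  classical
  refine ⟨hdef, fun a π g ι => rfl, ?_⟩
  set S : Set (Equiv.Perm (G × Fin n)) := {f | ∃ a π, f = hdef a π} with hS
  -- every element of the closure is of the form `hdef a π`
  have hmemS : ∀ x ∈ Subgroup.closure S, x ∈ S := by
    intro x hx
    refine Subgroup.closure_induction (fun y hy => hy) ?_ ?_ ?_ hx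
    · exact ⟨fun _ => 1, 1, hdef_one.symm⟩
    · rintro y z - - ⟨a, π, rfl⟩ ⟨b, σ, rfl⟩
      exact ⟨_, _, (hdef_mul a b π σ)⟩
    · rintro y - ⟨a, π, rfl⟩
      exact ⟨_, _, hdef_inv a π⟩
  have hdata : ∀ x : ↥(Subgroup.closure S), ∃ a π, (x : Equiv.Perm (G × Fin n)) = hdef a π :=
    fun x => hmemS x x.2
  choose A P hAP using hdata
  intro s
  -- the finite subgroup `K` of `G` generated by all relevant entries
  set T : Finset G := s.biUnion (fun x => Finset.univ.image (A x)) with hT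
  set K : Subgroup G := Subgroup.closure (T : Set G) with hK
  have hKfin : (K : Set G).Finite := hlf T
  -- the subgroup of elements whose data lies in `K`
  set W : Subgroup ↥(Subgroup.closure S) :=
    { carrier := {x | ∃ a π, (∀ i, a i ∈ K) ∧ (x : Equiv.Perm (G × Fin n)) = hdef a π}
      one_mem' := ⟨fun _ => 1, 1, fun _ => one_mem K, by simp [hdef_one]⟩
      mul_mem' := by
        rintro x y ⟨a, π, ha, hx⟩ ⟨b, σ, hb, hy⟩
        refine ⟨fun ι => b ι * a (σ ι), π * σ, fun i => mul_mem (hb _) (ha _), ?_⟩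
        push_cast
        rw [hx, hy, hdef_mul]
      inv_mem' := by
        rintro x ⟨a, π, ha, hx⟩
        refine ⟨fun ι => (a (π⁻¹ ι))⁻¹, π⁻¹, fun i => inv_mem (ha _), ?_⟩
        push_cast
        rw [hx, hdef_inv] } with hW
  have hsW : (s : Set ↥(Subgroup.closure S)) ⊆ (W : Set _) := by
    intro x hx
    refine ⟨A x, P x, fun i => ?_, hAP x⟩
    apply Subgroup.subset_closure
    have : A x i ∈ T := Finset.mem_biUnion.2 ⟨x, hx, Finset.mem_image.2 ⟨i, Finset.mem_univ i, rfl⟩⟩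
    exact this
  have hle : Subgroup.closure (s : Set ↥(Subgroup.closure S)) ≤ W :=
    (Subgroup.closure_le W).2 hsW
  -- `W` is finite
  have hWfin : (W : Set ↥(Subgroup.closure S)).Finite := by
    set φ : ↥(Subgroup.closure S) → (Fin n → G × Fin n) :=
      fun x i => (x : Equiv.Perm (G × Fin n)) (1, i) with hφ
    have himg : φ '' (W : Set _) ⊆ Set.pi Set.univ (fun _ => (K : Set G) ×ˢ (Set.univ : Set (Fin n))) := by
      rintro f ⟨x, ⟨a, π, ha, hx⟩, rfl⟩
      intro i _
      simp only [hφ, hx, hdef_apply, one_mul]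
      exact ⟨ha i, Set.mem_univ _⟩
    have hpifin : (Set.pi Set.univ (fun _ : Fin n => (K : Set G) ×ˢ (Set.univ : Set (Fin n)))).Finite :=
      Set.Finite.pi (fun _ => hKfin.prod Set.finite_univ)
    have hinj : Set.InjOn φ (W : Set _) := by
      rintro x ⟨a, π, ha, hx⟩ y ⟨b, σ, hb, hy⟩ hxy
      have h1 : ∀ i, (1 * a i, π i) = ((1 : G) * b i, σ i) := by
        intro i
        have := congrFun hxy i
        simpa [hφ, hx, hy] using this
      have hab : a = b := by
        funext i
        have := congrArg Prod.fst (h1 i)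
        simpa using this
      have hπσ : π = σ := Equiv.ext fun i => congrArg Prod.snd (h1 i)
      apply Subtype.ext
      rw [hx, hy, hab, hπσ]
    exact Set.Finite.of_finite_image (hpifin.subset himg) hinj
  exact hWfin.subset (SetLike.coe_subset_coe.2 hle)
end

section
/- Let ⟨G_n⟩_{n<ω} be an increasing chain of locally finite groups with union G_ω, and for each n let a_n ∈ G_{n+1} be an element that commutes with every element of G_n, such that: (i) the quantifier-free type of a_n over G_n in G_{n+1} is the same for all n (formally: for every word w, w(a_n) = e in G_{n+1} iff w(a_{n+1}) = e in G_{n+2}, and w(a_n) ∈ G_n iff w(a_{n+1}) ∈ G_{n+1}); (ii) the cyclic subgroup ⟨a_n⟩ meets G_n only in the identity except that a_n has fixed finite order k, i.e. for 1 ≤ i ≤ k: a_nⁱ = e iff a_nⁱ ∈ G_n iff i = k. Set b_n = a₀·a₁·⋯·a_n. Then there exists a locally finite group G_{ω+1} ⊇ G_ω and an element b_ω ∈ G_{ω+1} such that for every n, the quantifier-free type of b_ω over G_n in G_{ω+1} equals the quantifier-free type of b_n over G_n in G_{n+1}. -/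
universe u

namespace Stmt13Aux

variable {Gω : Type u} [Group Gω]

/-- Evaluation of a word at `x` and constants `c`. -/
def L (x : Gω) (c : ℕ → Gω) : FreeGroup (Option ℕ) →* Gω :=
  FreeGroup.lift (fun o => Option.elim o x c)

/-- Exponent sum of the distinguished variable. -/
def S : FreeGroup (Option ℕ) →* Multiplicative ℤ :=
  FreeGroup.lift (fun o => Option.elim o (Multiplicative.ofAdd (1:ℤ)) (fun _ => 1))

lemma decomp (aa x : Gω) (c : ℕ → Gω) (hx : Commute aa x) (hc : ∀ i, Commute aa (c i))
    (w : FreeGroup (Option ℕ)) :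
    L (x * aa) c w = L x c w * aa ^ (Multiplicative.toAdd (S w)) := by
  have hxZ : x ∈ Subgroup.centralizer {aa} := by
    rw [Subgroup.mem_centralizer_iff]
    rintro g rfl
    exact hx.eq
  have hcZ : ∀ i, c i ∈ Subgroup.centralizer {aa} := by
    intro i
    rw [Subgroup.mem_centralizer_iff]
    rintro g rfl
    exact (hc i).eq
  set Z := Subgroup.centralizer ({aa} : Set Gω) with hZ
  have hZcomm : ∀ y : Z, Commute aa (y : Gω) := by
    rintro ⟨y, hy⟩
    exact (Subgroup.mem_centralizer_iff.1 hy aa rfl)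
  let μ : Z × Multiplicative ℤ →* Gω :=
    { toFun := fun p => (p.1 : Gω) * aa ^ (Multiplicative.toAdd p.2)
      map_one' := by simp
      map_mul' := by
        rintro ⟨y, t⟩ ⟨y', t'⟩
        have hcom : Commute (aa ^ (Multiplicative.toAdd t)) (y' : Gω) :=
          (hZcomm y').zpow_left _
        simp only [Prod.fst_mul, Prod.snd_mul, Subgroup.coe_mul, toAdd_mul, zpow_add]
        exact (hcom.mul_mul_mul_comm (y : Gω) _).symm }
  let ρ : FreeGroup (Option ℕ) →* Z × Multiplicative ℤ :=
    FreeGroup.lift (fun o => Option.elim o ((⟨x, hxZ⟩ : Z), Multiplicative.ofAdd (1:ℤ))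
      (fun i => ((⟨c i, hcZ i⟩ : Z), 1)))
  have h1 : μ.comp ρ = L (x * aa) c := by
    apply FreeGroup.ext_hom
    rintro (_|i) <;> simp [L, μ, ρ]
  have h2 : Z.subtype.comp ((MonoidHom.fst Z (Multiplicative ℤ)).comp ρ) = L x c := by
    apply FreeGroup.ext_hom
    rintro (_|i) <;> simp [L, ρ]
  have h3 : (MonoidHom.snd Z (Multiplicative ℤ)).comp ρ = S := by
    apply FreeGroup.ext_hom
    rintro (_|i) <;> simp [S, ρ]
  calc L (x * aa) c w = μ (ρ w) := by rw [← h1]; rfl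
    _ = ((ρ w).1 : Gω) * aa ^ (Multiplicative.toAdd (ρ w).2) := rfl
    _ = L x c w * aa ^ (Multiplicative.toAdd (S w)) := by rw [← h2, ← h3]; rfl

lemma mem_of (K : Subgroup Gω) {x : Gω} {c : ℕ → Gω} (hx : x ∈ K) (hc : ∀ i, c i ∈ K)
    (w : FreeGroup (Option ℕ)) : L x c w ∈ K := by
  have hr : (L x c).range ≤ K := by
    rw [L, FreeGroup.range_lift_eq_closure]
    refine (Subgroup.closure_le K).2 ?_
    rintro g ⟨o, rfl⟩
    cases o with
    | none => exact hx
    | some i => exact hc i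
  exact hr ⟨w, rfl⟩

end Stmt13Aux

open Stmt13Aux

/-- Limits of partial products: given an increasing chain `⟨G_n⟩` of (locally
finite) groups with union `G_ω`, and elements `a_n ∈ G_{n+1}` commuting with
`G_n`, with constant quantifier-free type over `G_n` and cyclic group meeting
`G_n` trivially except for the fixed order `k`, the partial products
`b_n = a₀⋯a_n` have a limit: there is a locally finite `G_{ω+1} ⊇ G_ω` with an
element `b_ω` whose quantifier-free type over each `G_n` equals that of `b_n`. -/
theorem stmt13 {Gω : Type u} [Group Gω] (hlf : IsLocallyFiniteGroup Gω)
    (G : ℕ → Subgroup Gω) (hmono : Monotone G) (hunion : (⨆ n, G n) = ⊤)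
    (k : ℕ) (hk : 2 ≤ k)
    (a : ℕ → Gω) (ha : ∀ n, a n ∈ G (n + 1))
    -- each `a_n` commutes with every element of `G_n`
    (hcomm : ∀ n, ∀ g ∈ G n, Commute (a n) g)
    -- (i) the quantifier-free type of `a_n` over `G_n` is the same for all `n`
    (htype : ∀ (n : ℕ) (w : FreeGroup Unit),
        ((FreeGroup.lift fun _ => a n) w = 1 ↔
          (FreeGroup.lift fun _ => a (n + 1)) w = 1) ∧
        ((FreeGroup.lift fun _ => a n) w ∈ G n ↔
          (FreeGroup.lift fun _ => a (n + 1)) w ∈ G (n + 1)))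
    -- (ii) for `1 ≤ i ≤ k` : `a_nⁱ = e` iff `a_nⁱ ∈ G_n` iff `i = k`
    (horder : ∀ n i, 1 ≤ i → i ≤ k →
        ((a n ^ i = 1) ↔ i = k) ∧ ((a n ^ i ∈ G n) ↔ i = k))
    -- `b_n = a₀ · a₁ · ⋯ · a_n`
    (b : ℕ → Gω) (hb0 : b 0 = a 0) (hbs : ∀ n, b (n + 1) = b n * a (n + 1)) :
    ∃ (H : GrpCat.{u}) (e : Gω →* H), Function.Injective e ∧
      IsLocallyFiniteGroup H ∧
      ∃ bω : H, ∀ (n : ℕ) (w : FreeGroup (Option ℕ)) (c : ℕ → Gω),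
        (∀ i, c i ∈ G n) →
        ((FreeGroup.lift fun o => Option.elim o bω fun i => e (c i)) w = 1 ↔
          (FreeGroup.lift fun o => Option.elim o (b n) fun i => c i) w = 1) := by
  classical
  have hk0 : 0 < k := by omega
  -- order facts
  have hzpow : ∀ n (j : ℤ), ((a n) ^ j = 1 ↔ (k:ℤ) ∣ j) ∧ ((a n) ^ j ∈ G n ↔ (k:ℤ) ∣ j) := by
    intro n j
    have hak : a n ^ k = 1 := ((horder n k (by omega) le_rfl).1).2 rfl
    have hord : orderOf (a n) = k := by
      rw [orderOf_eq_iff hk0]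
      refine ⟨hak, ?_⟩
      intro m hm hm0 h1
      have := ((horder n m hm0 hm.le).1).1 h1
      omega
    have hpow1 : (a n) ^ j = 1 ↔ (k:ℤ) ∣ j := by
      rw [← orderOf_dvd_iff_zpow_eq_one, hord]
    refine ⟨hpow1, ?_⟩
    constructor
    · intro hmem
      by_contra hnd
      have hmod : a n ^ j = a n ^ (j % (k:ℤ)) := by
        conv_lhs => rw [← Int.emod_add_mul_ediv j (k:ℤ)]
        rw [zpow_add, zpow_mul, show (a n) ^ ((k:ℤ)) = 1 by
          rw [zpow_natCast]; exact hak]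
        simp
      set r : ℕ := (j % (k:ℤ)).toNat with hr
      have hjk : (0:ℤ) < (k:ℤ) := by exact_mod_cast hk0
      have h0le : 0 ≤ j % (k:ℤ) := Int.emod_nonneg j (by omega)
      have hlt : j % (k:ℤ) < (k:ℤ) := Int.emod_lt_of_pos j hjk
      have hrcast : ((r:ℤ)) = j % (k:ℤ) := Int.toNat_of_nonneg h0le
      have hrk : r < k := by omega
      have hr1 : 1 ≤ r := by
        rcases Nat.eq_zero_or_pos r with h | h
        · exfalso
          apply hnd
          have : j % (k:ℤ) = 0 := by omega
          exact Int.dvd_of_emod_eq_zero this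
        · exact h
      have hmem' : a n ^ r ∈ G n := by
        have : a n ^ ((r:ℤ)) ∈ G n := by rw [hrcast, ← hmod]; exact hmem
        rwa [zpow_natCast] at this
      have := ((horder n r hr1 hrk.le).2).1 hmem'
      omega
    · rintro ⟨q, rfl⟩
      rw [zpow_mul, zpow_natCast, hak, one_zpow]
      exact one_mem _
  -- the shifted sequence B
  let B : ℕ → Gω := fun m => Nat.casesOn m 1 b
  have hbB : ∀ m, b m = B m * a m := by
    intro m
    cases m with
    | zero => rw [hb0]; simp [B]
    | succ m => rw [hbs m]
  have hBmem : ∀ m, B m ∈ G m := by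
    intro m
    induction m with
    | zero => exact one_mem _
    | succ m ih =>
      show b m ∈ G (m+1)
      rw [hbB m]
      exact mul_mem (hmono (Nat.le_succ m) ih) (ha m)
  -- core lemma
  have core : ∀ m (c : ℕ → Gω), (∀ i, c i ∈ G m) → ∀ w,
      (L (b m) c w = 1 ↔ (L (B m) c w = 1 ∧ (k:ℤ) ∣ Multiplicative.toAdd (S w))) := by
    intro m c hc w
    have hd := decomp (a m) (B m) c (hcomm m _ (hBmem m)) (fun i => hcomm m _ (hc i)) w
    rw [← hbB m] at hd
    have hmem : L (B m) c w ∈ G m := mem_of (G m) (hBmem m) hc w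
    constructor
    · intro h1
      rw [hd] at h1
      have h2 : (L (B m) c w)⁻¹ = a m ^ (Multiplicative.toAdd (S w)) :=
        inv_eq_of_mul_eq_one_right h1
      have hdvd : (k:ℤ) ∣ Multiplicative.toAdd (S w) :=
        ((hzpow m _).2).1 (h2 ▸ inv_mem hmem)
      have hone : a m ^ (Multiplicative.toAdd (S w)) = 1 := ((hzpow m _).1).2 hdvd
      rw [hone, mul_one] at h1
      exact ⟨h1, hdvd⟩
    · rintro ⟨h1, hdvd⟩
      rw [hd, h1, one_mul, ((hzpow m _).1).2 hdvd]
  -- step and constancy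
  have step : ∀ m (c : ℕ → Gω), (∀ i, c i ∈ G m) → ∀ w,
      (L (b (m+1)) c w = 1 ↔ L (b m) c w = 1) := by
    intro m c hc w
    have hc' : ∀ i, c i ∈ G (m+1) := fun i => hmono (Nat.le_succ m) (hc i)
    rw [core (m+1) c hc' w]
    have hBb : L (B (m+1)) c w = L (b m) c w := rfl
    rw [hBb]
    constructor
    · rintro ⟨h1, _⟩; exact h1
    · intro h1; exact ⟨h1, ((core m c hc w).1 h1).2⟩
  have hconst : ∀ n m, n ≤ m → ∀ (c : ℕ → Gω), (∀ i, c i ∈ G n) → ∀ w,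
      (L (b m) c w = 1 ↔ L (b n) c w = 1) := by
    intro n m hnm
    induction m, hnm using Nat.le_induction with
    | base => intro c hc w; exact Iff.rfl
    | succ m hnm ih =>
      intro c hc w
      rw [step m c (fun i => hmono hnm (hc i)) w]
      exact ih c hc w
  -- the germ group
  let Q := Filter.Germ (Filter.atTop : Filter ℕ) Gω
  let coeQ : (ℕ → Gω) →* Q := Filter.Germ.coeMulHom _
  let e₀ : Gω →* Q := coeQ.comp (Pi.constMonoidHom ℕ Gω)
  let bω₀ : Q := coeQ b
  have key : ∀ n (c : ℕ → Gω), (∀ i, c i ∈ G n) → ∀ w,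
      ((FreeGroup.lift (fun o => Option.elim o bω₀ (fun i => e₀ (c i)))) w = 1 ↔
        L (b n) c w = 1) := by
    intro n c hc w
    let ψ : Option ℕ → (ℕ → Gω) := fun o => Option.elim o b (fun i _ => c i)
    have hcomp : FreeGroup.lift (fun o => Option.elim o bω₀ (fun i => e₀ (c i))) =
        coeQ.comp (FreeGroup.lift ψ) := by
      apply FreeGroup.ext_hom
      rintro (_|i) <;> simp [ψ, e₀, bω₀] <;> rfl
    have heval : ∀ m, FreeGroup.lift ψ w m = L (b m) c w := by
      intro m
      have h : (Pi.evalMonoidHom (fun _ : ℕ => Gω) m).comp (FreeGroup.lift ψ) = L (b m) c := by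
        apply FreeGroup.ext_hom
        rintro (_|i) <;> simp [ψ, L, Pi.evalMonoidHom]
      exact DFunLike.congr_fun h w
    rw [hcomp]
    have h1 : (coeQ.comp (FreeGroup.lift ψ)) w = coeQ (FreeGroup.lift ψ w) := rfl
    rw [h1]
    have h2 : coeQ (FreeGroup.lift ψ w) = 1 ↔
        ∀ᶠ m in Filter.atTop, FreeGroup.lift ψ w m = 1 := by
      rw [show (1 : Q) = coeQ 1 from (map_one coeQ).symm]
      exact Filter.Germ.coe_eq
    rw [h2]
    constructor
    · intro h
      obtain ⟨M, hM⟩ := Filter.eventually_atTop.1 h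
      have hmax := hM (max M n) (le_max_left _ _)
      rw [heval] at hmax
      exact (hconst n (max M n) (le_max_right _ _) c hc w).1 hmax
    · intro h
      refine Filter.eventually_atTop.2 ⟨n, fun m hm => ?_⟩
      rw [heval]
      exact (hconst n m hm c hc w).2 h
  -- the group H
  let X : Set Q := Set.range e₀ ∪ {bω₀}
  let H : Subgroup Q := Subgroup.closure X
  have he : ∀ g, e₀ g ∈ H := fun g => Subgroup.subset_closure (Or.inl ⟨g, rfl⟩)
  have hbωH : bω₀ ∈ H := Subgroup.subset_closure (Or.inr rfl)
  let e : Gω →* H := e₀.codRestrict H he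
  have he₀inj : Function.Injective e₀ := by
    intro g g' h
    have h' : (fun _ : ℕ => g) =ᶠ[Filter.atTop] (fun _ : ℕ => g') := Filter.Germ.coe_eq.1 h
    obtain ⟨m, hm⟩ := h'.exists
    exact hm
  have heinj : Function.Injective e := by
    intro g g' h
    exact he₀inj (congrArg Subtype.val h)
  have hHlf : IsLocallyFiniteGroup H := by
    intro t
    -- each element of H lies in the closure of a finite subset of X
    have hfin : ∀ y ∈ H, ∃ F : Finset Q, ↑F ⊆ X ∧ y ∈ Subgroup.closure (↑F : Set Q) := by
      intro y hy
      refine Subgroup.closure_induction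
        (p := fun y _ => ∃ F : Finset Q, ↑F ⊆ X ∧ y ∈ Subgroup.closure (↑F : Set Q))
        ?_ ?_ ?_ ?_ hy
      · intro z hz
        exact ⟨{z}, by simpa using hz, Subgroup.subset_closure (by simp)⟩
      · exact ⟨∅, by simp, one_mem _⟩
      · rintro z z' _ _ ⟨F1, hF1, hzF1⟩ ⟨F2, hF2, hzF2⟩
        refine ⟨F1 ∪ F2, ?_, ?_⟩
        · rw [Finset.coe_union]
          exact Set.union_subset hF1 hF2
        · exact mul_mem
            (Subgroup.closure_mono (by rw [Finset.coe_union]; exact Set.subset_union_left) hzF1)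
            (Subgroup.closure_mono (by rw [Finset.coe_union]; exact Set.subset_union_right) hzF2)
      · rintro z _ ⟨F, hF, hzF⟩
        exact ⟨F, hF, inv_mem hzF⟩
    choose F hFX hFmem using fun (x : H) => hfin (x : Q) x.2
    set FF : Finset Q := t.sup F with hFF
    have hFFX : (↑FF : Set Q) ⊆ X := by
      intro q hq
      obtain ⟨x, _, hq⟩ := Finset.mem_sup.1 hq
      exact hFX x hq
    have hmemFF : ∀ x ∈ t, (x : Q) ∈ Subgroup.closure (↑FF : Set Q) := fun x hx =>
      Subgroup.closure_mono (Finset.coe_subset.2 (Finset.le_sup hx)) (hFmem x)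
    -- the finite set of parameters
    set D : Set Gω := e₀ ⁻¹' ↑FF with hDdef
    have hD : D.Finite := (FF.finite_toSet).preimage he₀inj.injOn
    have hex : ∀ g : Gω, ∃ N, g ∈ G N := by
      intro g
      have hg : g ∈ ⨆ n, G n := by rw [hunion]; trivial
      exact (Subgroup.mem_iSup_of_directed hmono.directed_le).1 hg
    choose Nf hNf using hex
    set N : ℕ := hD.toFinset.sup Nf with hN
    have hDN : ∀ g ∈ D, g ∈ G N := fun g hg =>
      hmono (Finset.le_sup (hD.mem_toFinset.2 hg)) (hNf g)
    set l : List Gω := hD.toFinset.toList with hl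
    set c : ℕ → Gω := fun i => if h : i < l.length then l.get ⟨i, h⟩ else 1 with hcdef
    have hcN : ∀ i, c i ∈ G N := by
      intro i
      by_cases h : i < l.length
      · simp only [hcdef, dif_pos h]
        apply hDN
        have hmem : l.get ⟨i, h⟩ ∈ l := List.get_mem l ⟨i, h⟩
        exact hD.mem_toFinset.1 (Finset.mem_toList.1 hmem)
      · simp only [hcdef, dif_neg h]
        exact one_mem _
    have hsurj : ∀ g ∈ D, ∃ i, c i = g := by
      intro g hg
      have hmem : g ∈ l := Finset.mem_toList.2 (hD.mem_toFinset.2 hg)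
      obtain ⟨⟨i, hi⟩, hg'⟩ := List.mem_iff_get.1 hmem
      exact ⟨i, by simp only [hcdef, dif_pos hi]; exact hg'⟩
    set Φ : FreeGroup (Option ℕ) →* Q :=
      FreeGroup.lift (fun o => Option.elim o bω₀ (fun i => e₀ (c i))) with hΦdef
    set φ : FreeGroup (Option ℕ) →* Gω := L (b N) c with hφdef
    have hkk : ∀ w, Φ w = 1 ↔ φ w = 1 := key N c hcN
    have hkerEq : Φ.ker = φ.ker := by
      ext w
      simpa [MonoidHom.mem_ker] using hkk w
    have hφr : ((φ.range : Subgroup Gω) : Set Gω).Finite := by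
      have hle : φ.range ≤
          Subgroup.closure ((insert (b N) (insert 1 hD.toFinset) : Finset Gω) : Set Gω) := by
        rw [hφdef, L, FreeGroup.range_lift_eq_closure]
        apply Subgroup.closure_mono
        rintro g ⟨o, rfl⟩
        cases o with
        | none => simp
        | some i =>
          by_cases h : i < l.length
          · have hci : c i ∈ D := by
              simp only [hcdef, dif_pos h]
              exact hD.mem_toFinset.1 (Finset.mem_toList.1 (List.get_mem l ⟨i, h⟩))
            simp only [Option.elim, Finset.coe_insert, Set.mem_insert_iff]
            right; right
            exact hD.mem_toFinset.2 hci
          · simp [hcdef, dif_neg h]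
      exact (hlf _).subset hle
    have hφfin : Finite φ.range := hφr.to_subtype
    have hq1 : Finite (FreeGroup (Option ℕ) ⧸ φ.ker) :=
      Finite.of_equiv _ (QuotientGroup.quotientKerEquivRange φ).symm.toEquiv
    have hq2 : Finite (FreeGroup (Option ℕ) ⧸ Φ.ker) := by rw [hkerEq]; exact hq1
    have hΦfin : Finite Φ.range :=
      Finite.of_equiv _ (QuotientGroup.quotientKerEquivRange Φ).toEquiv
    have hΦr : ((Φ.range : Subgroup Q) : Set Q).Finite := Set.toFinite _
    -- FF ⊆ range Φ
    have hXr : ∀ q ∈ (↑FF : Set Q), q ∈ Φ.range := by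
      intro q hq
      rcases hFFX hq with ⟨g, rfl⟩ | hq'
      · have hgD : g ∈ D := hq
        obtain ⟨i, hi⟩ := hsurj g hgD
        exact ⟨FreeGroup.of (some i), by simp [hΦdef, hi]⟩
      · rcases hq' with rfl
        exact ⟨FreeGroup.of none, by simp [hΦdef]⟩
    have hclos : Subgroup.closure (↑FF : Set Q) ≤ Φ.range := (Subgroup.closure_le _).2 hXr
    have himg : (Subtype.val '' ((Subgroup.closure (↑t : Set H) : Subgroup H) : Set H)) ⊆
        ((Φ.range : Subgroup Q) : Set Q) := by
      rintro q ⟨x, hx, rfl⟩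
      have hmap : (x : Q) ∈ Subgroup.map H.subtype (Subgroup.closure (↑t : Set H)) :=
        ⟨x, hx, rfl⟩
      rw [MonoidHom.map_closure] at hmap
      have h3 : Subgroup.closure (H.subtype '' ↑t) ≤ Φ.range := by
        apply (Subgroup.closure_le _).2
        rintro q ⟨x, hx, rfl⟩
        exact hclos (hmemFF x hx)
      exact h3 hmap
    exact Set.Finite.of_finite_image (hΦr.subset himg) Subtype.val_injective.injOn
  refine ⟨GrpCat.of H, e, heinj, hHlf, ⟨bω₀, hbωH⟩, ?_⟩
  intro n w c hc
  have hH : H.subtype.comp (FreeGroup.lift (fun o =>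
        Option.elim o (⟨bω₀, hbωH⟩ : H) (fun i => e (c i)))) =
      FreeGroup.lift (fun o => Option.elim o bω₀ (fun i => e₀ (c i))) := by
    apply FreeGroup.ext_hom
    rintro (_|i) <;> simp [e]
  constructor
  · intro h
    apply (key n c hc w).1
    rw [← DFunLike.congr_fun hH w]
    show H.subtype _ = 1
    rw [show FreeGroup.lift (fun o => Option.elim o (⟨bω₀, hbωH⟩ : H) (fun i => e (c i))) w
      = 1 from h]
    exact map_one _
  · intro h
    have h1 := (key n c hc w).2 h
    rw [← DFunLike.congr_fun hH w] at h1
    exact H.subtype_injective (h1.trans (map_one H.subtype).symm)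
end

section
/- Let NF_fin(G₀,G₁,G₂,G₃) denote the canonical stable amalgam of finite groups G₁, G₂ over G₀ (defined via all coset-triple permutation amalgams). Then NF_fin is symmetric: NF_fin(G₀,G₁,G₂,G₃) implies NF_fin(G₀,G₂,G₁,G₃). -/
universe u

/-- An amalgamation try over `G₀ ⊆ H₁`, `G₀ ⊆ H₂` (given by the embeddings
`κ₁`, `κ₂`): a choice of left coset representative sets `I₁ ⊆ H₁`, `I₂ ⊆ H₂`
of `G₀`, both containing the identity. -/
structure AmalgTry (G₀ H₁ H₂ : Type u) [Group G₀] [Group H₁] [Group H₂]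
    (κ₁ : G₀ →* H₁) (κ₂ : G₀ →* H₂) where
  I₁ : Set H₁
  I₂ : Set H₂
  one₁ : (1 : H₁) ∈ I₁
  one₂ : (1 : H₂) ∈ I₂
  rep₁ : ∀ g : H₁, ∃! r, r ∈ I₁ ∧ ∃ h : G₀, g = r * κ₁ h
  rep₂ : ∀ g : H₂, ∃! r, r ∈ I₂ ∧ ∃ h : G₀, g = r * κ₂ h

namespace AmalgTry

variable {G₀ H₁ H₂ : Type u} [Group G₀] [Group H₁] [Group H₂]
  {κ₁ : G₀ →* H₁} {κ₂ : G₀ →* H₂}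

/-- The set of triples `(g₀, g₁, g₂)` with `g₀ ∈ G₀`, `g₁ ∈ I₁`, `g₂ ∈ I₂`. -/
abbrev U (x : AmalgTry G₀ H₁ H₂ κ₁ κ₂) : Type u :=
  {p : G₀ × H₁ × H₂ // p.2.1 ∈ x.I₁ ∧ p.2.2 ∈ x.I₂}

/-- The canonical action of `g ∈ H₁` on the triples: `(g₀,g₁,g₂) ↦ (g₀',g₁',g₂)`
where `g₁' * g₀' = g₁ * g₀ * g` is the unique coset decomposition. -/
noncomputable def j₁ (x : AmalgTry G₀ H₁ H₂ κ₁ κ₂) (g : H₁) (u : x.U) : x.U :=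
  ⟨⟨((x.rep₁ (u.val.2.1 * κ₁ u.val.1 * g)).exists.choose_spec.2).choose,
    (x.rep₁ (u.val.2.1 * κ₁ u.val.1 * g)).exists.choose,
    u.val.2.2⟩,
   ⟨(x.rep₁ (u.val.2.1 * κ₁ u.val.1 * g)).exists.choose_spec.1, u.prop.2⟩⟩

/-- The canonical action of `g ∈ H₂` on the triples: `(g₀,g₁,g₂) ↦ (g₀'',g₁,g₂'')`
where `g₂'' * g₀'' = g₂ * g₀ * g` is the unique coset decomposition. -/
noncomputable def j₂ (x : AmalgTry G₀ H₁ H₂ κ₁ κ₂) (g : H₂) (u : x.U) : x.U :=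
  ⟨⟨((x.rep₂ (u.val.2.2 * κ₂ u.val.1 * g)).exists.choose_spec.2).choose,
    u.val.2.1,
    (x.rep₂ (u.val.2.2 * κ₂ u.val.1 * g)).exists.choose⟩,
   ⟨u.prop.1, (x.rep₂ (u.val.2.2 * κ₂ u.val.1 * g)).exists.choose_spec.1⟩⟩

end AmalgTry

/-- `F : G₃ → (U → U)` is a compatible homomorphism for the try `x`: it is an
(anti)homomorphism to the permutations of the triples (composition read from
the left as in the paper) restricting to `j₁` on `G₁` and to `j₂` on `G₂`. -/
def CompatAt {G₀ G₁ G₂ G₃ H₁ H₂ : Type u}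
    [Group G₀] [Group G₁] [Group G₂] [Group G₃] [Group H₁] [Group H₂]
    (ι₁ : G₀ →* G₁) (ι₂ : G₀ →* G₂) (e₁ : G₁ →* G₃) (e₂ : G₂ →* G₃)
    (f₁ : G₁ →* H₁) (f₂ : G₂ →* H₂)
    (x : AmalgTry G₀ H₁ H₂ (f₁.comp ι₁) (f₂.comp ι₂))
    (F : G₃ → (x.U → x.U)) : Prop :=
  F 1 = id ∧ (∀ a b : G₃, F (a * b) = F b ∘ F a) ∧
  (∀ g : G₁, F (e₁ g) = x.j₁ (f₁ g)) ∧ (∀ g : G₂, F (e₂ g) = x.j₂ (f₂ g))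

/-- A witness that some amalgamation try separates `a ∈ G₃` from the identity. -/
structure SepWitness {G₀ G₁ G₂ G₃ : Type u}
    [Group G₀] [Group G₁] [Group G₂] [Group G₃]
    (ι₁ : G₀ →* G₁) (ι₂ : G₀ →* G₂) (e₁ : G₁ →* G₃) (e₂ : G₂ →* G₃)
    (a : G₃) : Type (u + 1) where
  H₁ : Type u
  H₂ : Type u
  [grp₁ : Group H₁]
  [grp₂ : Group H₂]
  f₁ : G₁ →* H₁
  f₂ : G₂ →* H₂
  inj₁ : Function.Injective f₁
  inj₂ : Function.Injective f₂
  lf₁ : IsLocallyFiniteGroup H₁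
  lf₂ : IsLocallyFiniteGroup H₂
  x : AmalgTry G₀ H₁ H₂ (f₁.comp ι₁) (f₂.comp ι₂)
  F : G₃ → (x.U → x.U)
  compat : CompatAt ι₁ ι₂ e₁ e₂ f₁ f₂ x F
  sep : F a ≠ id

/-- `NF_fin(G₀,G₁,G₂,G₃)`: the canonical stable amalgam of `G₁`, `G₂` over `G₀`
inside `G₃` (the subgroup inclusions are given by the injective homomorphisms
`ι₁`, `ι₂`, `e₁`, `e₂` with `e₁ ∘ ι₁ = e₂ ∘ ι₂`, and `G₃ = ⟨G₁ ∪ G₂⟩`):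
for every amalgamation try (over locally finite extensions of the factors)
there is a compatible homomorphism from `G₃`, and these jointly separate
the points of `G₃`. -/
def NFfin (G₀ G₁ G₂ G₃ : Type u) [Group G₀] [Group G₁] [Group G₂] [Group G₃]
    (ι₁ : G₀ →* G₁) (ι₂ : G₀ →* G₂) (e₁ : G₁ →* G₃) (e₂ : G₂ →* G₃) : Prop :=
  Function.Injective ι₁ ∧ Function.Injective ι₂ ∧
  Function.Injective e₁ ∧ Function.Injective e₂ ∧
  (∀ g : G₀, e₁ (ι₁ g) = e₂ (ι₂ g)) ∧
  Subgroup.closure (Set.range e₁ ∪ Set.range e₂) = (⊤ : Subgroup G₃) ∧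
  (∀ (H₁ H₂ : Type u) [Group H₁] [Group H₂] (f₁ : G₁ →* H₁) (f₂ : G₂ →* H₂),
    Function.Injective f₁ → Function.Injective f₂ →
    IsLocallyFiniteGroup H₁ → IsLocallyFiniteGroup H₂ →
    ∀ x : AmalgTry G₀ H₁ H₂ (f₁.comp ι₁) (f₂.comp ι₂),
      ∃ F : G₃ → (x.U → x.U), CompatAt ι₁ ι₂ e₁ e₂ f₁ f₂ x F) ∧
  (∀ a : G₃, a ≠ 1 → Nonempty (SepWitness ι₁ ι₂ e₁ e₂ a))

namespace AmalgTry

variable {G₀ A B : Type u} [Group G₀] [Group A] [Group B]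
  {κa : G₀ →* A} {κb : G₀ →* B}

/-- Swap the two sides of an amalgamation try. -/
def swap (x : AmalgTry G₀ A B κa κb) : AmalgTry G₀ B A κb κa :=
  ⟨x.I₂, x.I₁, x.one₂, x.one₁, x.rep₂, x.rep₁⟩

/-- The canonical bijection between the triples of a try and those of its swap. -/
def swapEquiv (x : AmalgTry G₀ A B κa κb) : x.U ≃ x.swap.U where
  toFun u := ⟨(u.val.1, u.val.2.2, u.val.2.1), u.prop.2, u.prop.1⟩
  invFun u := ⟨(u.val.1, u.val.2.2, u.val.2.1), u.prop.2, u.prop.1⟩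
  left_inv _ := rfl
  right_inv _ := rfl

theorem swap_j₁ (x : AmalgTry G₀ A B κa κb) (g : B) (u : x.U) :
    x.swap.j₁ g (x.swapEquiv u) = x.swapEquiv (x.j₂ g u) := rfl

theorem swap_j₂ (x : AmalgTry G₀ A B κa κb) (g : A) (u : x.U) :
    x.swap.j₂ g (x.swapEquiv u) = x.swapEquiv (x.j₁ g u) := rfl

end AmalgTry

theorem CompatAt.swap {G₀ G₁ G₂ G₃ A B : Type u}
    [Group G₀] [Group G₁] [Group G₂] [Group G₃] [Group A] [Group B]
    {ι₁ : G₀ →* G₁} {ι₂ : G₀ →* G₂} {e₁ : G₁ →* G₃} {e₂ : G₂ →* G₃}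
    {f₁ : G₁ →* A} {f₂ : G₂ →* B}
    {x : AmalgTry G₀ A B (f₁.comp ι₁) (f₂.comp ι₂)}
    {F : G₃ → (x.U → x.U)} (hF : CompatAt ι₁ ι₂ e₁ e₂ f₁ f₂ x F) :
    CompatAt ι₂ ι₁ e₂ e₁ f₂ f₁ x.swap
      (fun a => x.swapEquiv ∘ F a ∘ x.swapEquiv.symm) := by
  obtain ⟨h1, hmul, hj₁, hj₂⟩ := hF
  refine ⟨?_, ?_, ?_, ?_⟩
  · funext u; simp [h1]
  · intro a b; funext u; simp [hmul a b]
  · intro g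
    funext u
    have := x.swap_j₁ (f₂ g) (x.swapEquiv.symm u)
    rw [Equiv.apply_symm_apply] at this
    simp [hj₂ g, this]
  · intro g
    funext u
    have := x.swap_j₂ (f₁ g) (x.swapEquiv.symm u)
    rw [Equiv.apply_symm_apply] at this
    simp [hj₁ g, this]

/-- The canonical stable amalgam of finite groups is symmetric:
`NF_fin(G₀,G₁,G₂,G₃)` implies `NF_fin(G₀,G₂,G₁,G₃)`. -/
theorem stmt14 {G₀ G₁ G₂ G₃ : Type u}
    [Group G₀] [Group G₁] [Group G₂] [Group G₃]
    [Finite G₀] [Finite G₁] [Finite G₂] [Finite G₃]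
    (ι₁ : G₀ →* G₁) (ι₂ : G₀ →* G₂) (e₁ : G₁ →* G₃) (e₂ : G₂ →* G₃)
    (h : NFfin G₀ G₁ G₂ G₃ ι₁ ι₂ e₁ e₂) :
    NFfin G₀ G₂ G₁ G₃ ι₂ ι₁ e₂ e₁ := by
  obtain ⟨hι₁, hι₂, he₁, he₂, hcomm, hclos, hexist, hsep⟩ := h
  refine ⟨hι₂, hι₁, he₂, he₁, fun g => (hcomm g).symm, ?_, ?_, ?_⟩
  · rw [Set.union_comm]; exact hclos
  · intro H₁ H₂ _ _ f₁ f₂ hf₁ hf₂ lf₁ lf₂ x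
    obtain ⟨F, hF⟩ := hexist H₂ H₁ f₂ f₁ hf₂ hf₁ lf₂ lf₁ x.swap
    exact ⟨_, hF.swap⟩
  · intro a ha
    obtain ⟨W⟩ := hsep a ha
    letI := W.grp₁; letI := W.grp₂
    refine ⟨⟨W.H₂, W.H₁, W.f₂, W.f₁, W.inj₂, W.inj₁, W.lf₂, W.lf₁, W.x.swap,
      fun b => W.x.swapEquiv ∘ W.F b ∘ W.x.swapEquiv.symm, W.compat.swap, ?_⟩⟩
    intro hid
    apply W.sep
    funext u
    have := congrFun hid (W.x.swapEquiv u)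
    simpa using this
end

section
/- In the canonical stable amalgam NF_fin(G₀,G₁,G₂,G₃) of finite groups, the factors intersect in the base: G₁ ∩ G₂ = G₀ (computed inside G₃). -/
universe u

section Aux

variable {G₀ H : Type u} [Group G₀] [Group H]

lemma exists_try_rep (κ : G₀ →* H) {S : Set H}
    (hS : Subgroup.IsComplement S (κ.range : Set H)) :
    ∀ g : H, ∃! r, r ∈ S ∧ ∃ h : G₀, g = r * κ h := by
  intro g
  obtain ⟨s, hs, huniq⟩ :=
    (Subgroup.isComplement_iff_existsUnique_inv_mul_mem.mp hS) g
  obtain ⟨h, hh⟩ := hs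
  refine ⟨(s : H), ⟨s.2, h, ?_⟩, ?_⟩
  · rw [hh, mul_inv_cancel_left]
  · rintro r ⟨hrS, h', rfl⟩
    have : (⟨r, hrS⟩ : S) = s := huniq ⟨r, hrS⟩ ⟨h', by group⟩
    exact congrArg Subtype.val this

end Aux


/-- In the canonical stable amalgam `NF_fin(G₀,G₁,G₂,G₃)` of finite groups,
the factors intersect in the base: if `e₁ x = e₂ y` inside `G₃` then `x` and
`y` come from a common element of `G₀`. -/

theorem stmt15 {G₀ G₁ G₂ G₃ : Type u}
    [Group G₀] [Group G₁] [Group G₂] [Group G₃]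
    [Finite G₀] [Finite G₁] [Finite G₂] [Finite G₃]
    (ι₁ : G₀ →* G₁) (ι₂ : G₀ →* G₂) (e₁ : G₁ →* G₃) (e₂ : G₂ →* G₃)
    (h : NFfin G₀ G₁ G₂ G₃ ι₁ ι₂ e₁ e₂) :
    ∀ (x : G₁) (y : G₂), e₁ x = e₂ y →
      ∃ g₀ : G₀, x = ι₁ g₀ ∧ y = ι₂ g₀ := by
  intro x y hxy
  obtain ⟨-, -, -, -, -, -, hcompat, -⟩ := h
  -- build a try with H₁ = G₁, H₂ = G₂, f₁ = f₂ = id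
  set κ₁ : G₀ →* G₁ := (MonoidHom.id G₁).comp ι₁ with hκ₁
  set κ₂ : G₀ →* G₂ := (MonoidHom.id G₂).comp ι₂ with hκ₂
  obtain ⟨S₁, hS₁, hone₁⟩ := Subgroup.exists_isComplement_left (κ₁.range) 1
  obtain ⟨S₂, hS₂, hone₂⟩ := Subgroup.exists_isComplement_left (κ₂.range) 1
  let t : AmalgTry G₀ G₁ G₂ κ₁ κ₂ :=
    ⟨S₁, S₂, hone₁, hone₂, exists_try_rep κ₁ hS₁, exists_try_rep κ₂ hS₂⟩
  have lf₁ : IsLocallyFiniteGroup G₁ := fun s => Set.toFinite _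
  have lf₂ : IsLocallyFiniteGroup G₂ := fun s => Set.toFinite _
  obtain ⟨F, hF1, hFmul, hFj₁, hFj₂⟩ :=
    hcompat G₁ G₂ (MonoidHom.id G₁) (MonoidHom.id G₂)
      (fun _ _ hh => hh) (fun _ _ hh => hh) lf₁ lf₂ t
  have hFeq : F (e₁ x) = F (e₂ y) := by rw [hxy]
  rw [hFj₁ x, hFj₂ y] at hFeq
  let u₀ : t.U := ⟨(1, 1, 1), hone₁, hone₂⟩
  have hu : t.j₁ ((MonoidHom.id G₁) x) u₀ = t.j₂ ((MonoidHom.id G₂) y) u₀ :=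
    congrFun hFeq u₀
  -- unpack the two decompositions
  set g₁ : G₁ := u₀.val.2.1 * κ₁ u₀.val.1 * (MonoidHom.id G₁) x with hg₁def
  set g₂ : G₂ := u₀.val.2.2 * κ₂ u₀.val.1 * (MonoidHom.id G₂) y with hg₂def
  have hx1 : g₁ = x := by simp [hg₁def, u₀]
  have hy1 : g₂ = y := by simp [hg₂def, u₀]
  have spec₁ := (t.rep₁ g₁).exists.choose_spec
  have spec₂ := (t.rep₂ g₂).exists.choose_spec
  have hdec₁ : g₁ = (t.rep₁ g₁).exists.choose * κ₁ (spec₁.2.choose) :=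
    spec₁.2.choose_spec
  have hdec₂ : g₂ = (t.rep₂ g₂).exists.choose * κ₂ (spec₂.2.choose) :=
    spec₂.2.choose_spec
  have h0 : spec₁.2.choose = spec₂.2.choose := congrArg (fun u => u.val.1) hu
  have h1 : (t.rep₁ g₁).exists.choose = (1 : G₁) :=
    (congrArg (fun u => u.val.2.1) hu).trans rfl
  have h2 : (t.rep₂ g₂).exists.choose = (1 : G₂) :=
    ((congrArg (fun u => u.val.2.2) hu).symm).trans rfl
  refine ⟨spec₁.2.choose, ?_, ?_⟩
  · exact hx1.symm.trans (hdec₁.trans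
      ((congrArg (fun z => z * κ₁ spec₁.2.choose) h1).trans (one_mul _)))
  · exact (hy1.symm.trans (hdec₂.trans
      ((congrArg (fun z => z * κ₂ spec₂.2.choose) h2).trans (one_mul _)))).trans
      (congrArg (fun z => ι₂ z) h0).symm
end

section
/- Uniqueness of the stable amalgam: if NF_fin(G₀,G₁,G₂,G₃) and NF_fin(G₀',G₁',G₂',G₃') both hold with G₃' = ⟨G₁' ∪ G₂'⟩, and f₁ : G₁' ≅ G₁, f₂ : G₂' ≅ G₂ are isomorphisms agreeing on G₀', then there is a unique embedding f₃ : G₃' → G₃ extending f₁ ∪ f₂; it is onto if G₃ = ⟨G₁ ∪ G₂⟩. -/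
universe u

namespace AmalgTry

variable {G₀ H₁ H₂ : Type u} [Group G₀] [Group H₁] [Group H₂]
  {κ₁ : G₀ →* H₁} {κ₂ : G₀ →* H₂}

lemma j₁_spec (x : AmalgTry G₀ H₁ H₂ κ₁ κ₂) (g : H₁) (u : x.U) :
    (x.j₁ g u).val.2.2 = u.val.2.2 ∧
    (x.j₁ g u).val.2.1 * κ₁ ((x.j₁ g u).val.1) = u.val.2.1 * κ₁ u.val.1 * g := by
  refine ⟨rfl, ?_⟩
  exact ((x.rep₁ (u.val.2.1 * κ₁ u.val.1 * g)).exists.choose_spec.2).choose_spec.symm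

lemma j₂_spec (x : AmalgTry G₀ H₁ H₂ κ₁ κ₂) (g : H₂) (u : x.U) :
    (x.j₂ g u).val.2.1 = u.val.2.1 ∧
    (x.j₂ g u).val.2.2 * κ₂ ((x.j₂ g u).val.1) = u.val.2.2 * κ₂ u.val.1 * g := by
  refine ⟨rfl, ?_⟩
  exact ((x.rep₂ (u.val.2.2 * κ₂ u.val.1 * g)).exists.choose_spec.2).choose_spec.symm

lemma j₁_unique (x : AmalgTry G₀ H₁ H₂ κ₁ κ₂) (hinj : Function.Injective κ₁)
    (g : H₁) (u v : x.U) (h22 : v.val.2.2 = u.val.2.2)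
    (h21 : v.val.2.1 * κ₁ v.val.1 = u.val.2.1 * κ₁ u.val.1 * g) :
    v = x.j₁ g u := by
  obtain ⟨w22, w21⟩ := x.j₁_spec g u
  have hex := (x.rep₁ (u.val.2.1 * κ₁ u.val.1 * g))
  have hr : v.val.2.1 = (x.j₁ g u).val.2.1 :=
    hex.unique ⟨v.prop.1, v.val.1, h21.symm⟩ ⟨(x.j₁ g u).prop.1, (x.j₁ g u).val.1, w21.symm⟩
  have h0 : v.val.1 = (x.j₁ g u).val.1 := by
    apply hinj
    have := h21.trans w21.symm
    rw [hr] at this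
    exact mul_left_cancel this
  apply Subtype.ext
  exact Prod.ext h0 (Prod.ext hr (h22.trans w22.symm))

lemma j₂_unique (x : AmalgTry G₀ H₁ H₂ κ₁ κ₂) (hinj : Function.Injective κ₂)
    (g : H₂) (u v : x.U) (h21 : v.val.2.1 = u.val.2.1)
    (h22 : v.val.2.2 * κ₂ v.val.1 = u.val.2.2 * κ₂ u.val.1 * g) :
    v = x.j₂ g u := by
  obtain ⟨w21, w22⟩ := x.j₂_spec g u
  have hex := (x.rep₂ (u.val.2.2 * κ₂ u.val.1 * g))
  have hr : v.val.2.2 = (x.j₂ g u).val.2.2 :=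
    hex.unique ⟨v.prop.2, v.val.1, h22.symm⟩ ⟨(x.j₂ g u).prop.2, (x.j₂ g u).val.1, w22.symm⟩
  have h0 : v.val.1 = (x.j₂ g u).val.1 := by
    apply hinj
    have := h22.trans w22.symm
    rw [hr] at this
    exact mul_left_cancel this
  apply Subtype.ext
  exact Prod.ext h0 (Prod.ext (h21.trans w21.symm) hr)

variable {G₀' : Type u} [Group G₀']

/-- Transport an amalgamation try along an isomorphism of the base group. -/
def transport (x : AmalgTry G₀ H₁ H₂ κ₁ κ₂) (f₀ : G₀' ≃* G₀)
    (κ₁' : G₀' →* H₁) (κ₂' : G₀' →* H₂)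
    (hκ₁ : ∀ t, κ₁' t = κ₁ (f₀ t)) (hκ₂ : ∀ t, κ₂' t = κ₂ (f₀ t)) :
    AmalgTry G₀' H₁ H₂ κ₁' κ₂' where
  I₁ := x.I₁
  I₂ := x.I₂
  one₁ := x.one₁
  one₂ := x.one₂
  rep₁ := fun g => by
    obtain ⟨r, ⟨hr, c, hg⟩, hu⟩ := x.rep₁ g
    exact ⟨r, ⟨hr, f₀.symm c, by rw [hκ₁]; simpa using hg⟩,
      fun r' ⟨hr', c', hg'⟩ => hu r' ⟨hr', f₀ c', by rw [← hκ₁]; exact hg'⟩⟩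
  rep₂ := fun g => by
    obtain ⟨r, ⟨hr, c, hg⟩, hu⟩ := x.rep₂ g
    exact ⟨r, ⟨hr, f₀.symm c, by rw [hκ₂]; simpa using hg⟩,
      fun r' ⟨hr', c', hg'⟩ => hu r' ⟨hr', f₀ c', by rw [← hκ₂]; exact hg'⟩⟩

/-- The triples of a transported try are in bijection with the original ones. -/
def transportEquiv (x : AmalgTry G₀ H₁ H₂ κ₁ κ₂) (f₀ : G₀' ≃* G₀)
    (κ₁' : G₀' →* H₁) (κ₂' : G₀' →* H₂)
    (hκ₁ : ∀ t, κ₁' t = κ₁ (f₀ t)) (hκ₂ : ∀ t, κ₂' t = κ₂ (f₀ t)) :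
    (x.transport f₀ κ₁' κ₂' hκ₁ hκ₂).U ≃ x.U where
  toFun u := ⟨⟨f₀ u.val.1, u.val.2.1, u.val.2.2⟩, u.prop⟩
  invFun u := ⟨⟨f₀.symm u.val.1, u.val.2.1, u.val.2.2⟩, u.prop⟩
  left_inv u := by apply Subtype.ext; simp
  right_inv u := by apply Subtype.ext; simp

lemma transport_j₁ (x : AmalgTry G₀ H₁ H₂ κ₁ κ₂) (f₀ : G₀' ≃* G₀)
    (κ₁' : G₀' →* H₁) (κ₂' : G₀' →* H₂)
    (hκ₁ : ∀ t, κ₁' t = κ₁ (f₀ t)) (hκ₂ : ∀ t, κ₂' t = κ₂ (f₀ t))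
    (hinj : Function.Injective κ₁) (g : H₁)
    (u : (x.transport f₀ κ₁' κ₂' hκ₁ hκ₂).U) :
    x.transportEquiv f₀ κ₁' κ₂' hκ₁ hκ₂ ((x.transport f₀ κ₁' κ₂' hκ₁ hκ₂).j₁ g u)
      = x.j₁ g (x.transportEquiv f₀ κ₁' κ₂' hκ₁ hκ₂ u) := by
  obtain ⟨s22, s21⟩ := (x.transport f₀ κ₁' κ₂' hκ₁ hκ₂).j₁_spec g u
  refine x.j₁_unique hinj g _ _ s22 ?_
  show ((x.transport f₀ κ₁' κ₂' hκ₁ hκ₂).j₁ g u).val.2.1 *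
      κ₁ (f₀ (((x.transport f₀ κ₁' κ₂' hκ₁ hκ₂).j₁ g u).val.1)) =
    u.val.2.1 * κ₁ (f₀ u.val.1) * g
  rw [← hκ₁, ← hκ₁]
  exact s21

lemma transport_j₂ (x : AmalgTry G₀ H₁ H₂ κ₁ κ₂) (f₀ : G₀' ≃* G₀)
    (κ₁' : G₀' →* H₁) (κ₂' : G₀' →* H₂)
    (hκ₁ : ∀ t, κ₁' t = κ₁ (f₀ t)) (hκ₂ : ∀ t, κ₂' t = κ₂ (f₀ t))
    (hinj : Function.Injective κ₂) (g : H₂)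
    (u : (x.transport f₀ κ₁' κ₂' hκ₁ hκ₂).U) :
    x.transportEquiv f₀ κ₁' κ₂' hκ₁ hκ₂ ((x.transport f₀ κ₁' κ₂' hκ₁ hκ₂).j₂ g u)
      = x.j₂ g (x.transportEquiv f₀ κ₁' κ₂' hκ₁ hκ₂ u) := by
  obtain ⟨s21, s22⟩ := (x.transport f₀ κ₁' κ₂' hκ₁ hκ₂).j₂_spec g u
  refine x.j₂_unique hinj g _ _ s21 ?_
  show ((x.transport f₀ κ₁' κ₂' hκ₁ hκ₂).j₂ g u).val.2.2 *
      κ₂ (f₀ (((x.transport f₀ κ₁' κ₂' hκ₁ hκ₂).j₂ g u).val.1)) =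
    u.val.2.2 * κ₂ (f₀ u.val.1) * g
  rw [← hκ₂, ← hκ₂]
  exact s22

end AmalgTry
/-- Key separation lemma: along the "graph" subgroup generated by matched
generators, a pair whose first component is trivial has trivial second
component. -/
lemma NFfin.key {G₀ G₁ G₂ G₃ G₀' G₁' G₂' G₃' : Type u}
    [Group G₀] [Group G₁] [Group G₂] [Group G₃]
    [Group G₀'] [Group G₁'] [Group G₂'] [Group G₃']
    {ι₁ : G₀ →* G₁} {ι₂ : G₀ →* G₂} {e₁ : G₁ →* G₃} {e₂ : G₂ →* G₃}
    {ι₁' : G₀' →* G₁'} {ι₂' : G₀' →* G₂'} {e₁' : G₁' →* G₃'} {e₂' : G₂' →* G₃'}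
    (h : NFfin G₀ G₁ G₂ G₃ ι₁ ι₂ e₁ e₂)
    (h' : NFfin G₀' G₁' G₂' G₃' ι₁' ι₂' e₁' e₂')
    (f₀ : G₀' ≃* G₀) (f₁ : G₁' ≃* G₁) (f₂ : G₂' ≃* G₂)
    (hf₁ : ∀ g : G₀', f₁ (ι₁' g) = ι₁ (f₀ g))
    (hf₂ : ∀ g : G₀', f₂ (ι₂' g) = ι₂ (f₀ g))
    {p : G₃' × G₃}
    (hp : p ∈ Subgroup.closure
      ((Set.range fun z : G₁' => ((e₁' z, e₁ (f₁ z)) : G₃' × G₃)) ∪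
       (Set.range fun z : G₂' => ((e₂' z, e₂ (f₂ z)) : G₃' × G₃))))
    (h1 : p.1 = 1) : p.2 = 1 := by
  by_contra hb
  obtain ⟨w⟩ := h.2.2.2.2.2.2.2 p.2 hb
  letI := w.grp₁
  letI := w.grp₂
  have hκ₁ : ∀ t : G₀', ((w.f₁.comp f₁.toMonoidHom).comp ι₁') t
      = (w.f₁.comp ι₁) (f₀ t) := by
    intro t
    show w.f₁ (f₁ (ι₁' t)) = w.f₁ (ι₁ (f₀ t))
    rw [hf₁]
  have hκ₂ : ∀ t : G₀', ((w.f₂.comp f₂.toMonoidHom).comp ι₂') t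
      = (w.f₂.comp ι₂) (f₀ t) := by
    intro t
    show w.f₂ (f₂ (ι₂' t)) = w.f₂ (ι₂ (f₀ t))
    rw [hf₂]
  set x' := w.x.transport f₀ ((w.f₁.comp f₁.toMonoidHom).comp ι₁')
    ((w.f₂.comp f₂.toMonoidHom).comp ι₂') hκ₁ hκ₂ with hx'
  obtain ⟨F', hF'⟩ := h'.2.2.2.2.2.2.1 w.H₁ w.H₂
    (w.f₁.comp f₁.toMonoidHom) (w.f₂.comp f₂.toMonoidHom)
    (w.inj₁.comp f₁.injective) (w.inj₂.comp f₂.injective) w.lf₁ w.lf₂ x'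
  set Φ := w.x.transportEquiv f₀ ((w.f₁.comp f₁.toMonoidHom).comp ι₁')
    ((w.f₂.comp f₂.toMonoidHom).comp ι₂') hκ₁ hκ₂ with hΦ
  have claim : ∀ q : G₃' × G₃, q ∈ Subgroup.closure
      ((Set.range fun z : G₁' => ((e₁' z, e₁ (f₁ z)) : G₃' × G₃)) ∪
       (Set.range fun z : G₂' => ((e₂' z, e₂ (f₂ z)) : G₃' × G₃))) →
      ∀ u, Φ (F' q.1 u) = w.F q.2 (Φ u) := by
    intro q hq
    induction hq using Subgroup.closure_induction with
    | mem q hq =>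
      rcases hq with ⟨z, rfl⟩ | ⟨z, rfl⟩
      · intro u
        rw [hF'.2.2.1, w.compat.2.2.1]
        exact w.x.transport_j₁ f₀ _ _ hκ₁ hκ₂ (w.inj₁.comp h.1) _ u
      · intro u
        rw [hF'.2.2.2, w.compat.2.2.2]
        exact w.x.transport_j₂ f₀ _ _ hκ₁ hκ₂ (w.inj₂.comp h.2.1) _ u
    | one =>
      intro u
      show Φ (F' (1 : G₃') u) = w.F (1 : G₃) (Φ u)
      rw [hF'.1, w.compat.1]
      rfl
    | mul q r _ _ ihq ihr =>
      intro u
      show Φ (F' (q.1 * r.1) u) = w.F (q.2 * r.2) (Φ u)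
      rw [hF'.2.1, w.compat.2.1]
      show Φ (F' r.1 (F' q.1 u)) = w.F r.2 (w.F q.2 (Φ u))
      rw [ihr, ihq]
    | inv q _ ihq =>
      intro u
      show Φ (F' q.1⁻¹ u) = w.F q.2⁻¹ (Φ u)
      have e1 : F' q.1 (F' q.1⁻¹ u) = u := by
        have : F' q.1 ∘ F' q.1⁻¹ = id := by
          rw [← hF'.2.1, inv_mul_cancel, hF'.1]
        exact congrFun this u
      have e2 : ∀ v, w.F q.2⁻¹ (w.F q.2 v) = v := by
        intro v
        have : w.F q.2⁻¹ ∘ w.F q.2 = id := by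
          rw [← w.compat.2.1, mul_inv_cancel, w.compat.1]
        exact congrFun this v
      calc Φ (F' q.1⁻¹ u)
          = w.F q.2⁻¹ (w.F q.2 (Φ (F' q.1⁻¹ u))) := (e2 _).symm
        _ = w.F q.2⁻¹ (Φ (F' q.1 (F' q.1⁻¹ u))) := by rw [ihq]
        _ = w.F q.2⁻¹ (Φ u) := by rw [e1]
  apply w.sep
  funext v
  have := claim p hp (Φ.symm v)
  rw [h1, hF'.1] at this
  exact (congrArg (w.F p.2) (Φ.apply_symm_apply v)).symm.trans (this.symm.trans (Φ.apply_symm_apply v))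
/-- Uniqueness of the stable amalgam of finite groups: given
`NF_fin(G₀,G₁,G₂,G₃)` and `NF_fin(G₀',G₁',G₂',G₃')` and isomorphisms
`f₀ : G₀' ≅ G₀`, `f₁ : G₁' ≅ G₁`, `f₂ : G₂' ≅ G₂` compatible with the
inclusions (i.e. `f₁`, `f₂` agree on `G₀'`), there is a unique embedding
`f₃ : G₃' → G₃` extending `f₁ ∪ f₂`; it is onto since `G₃ = ⟨G₁ ∪ G₂⟩`. -/
theorem stmt16 {G₀ G₁ G₂ G₃ G₀' G₁' G₂' G₃' : Type u}
    [Group G₀] [Group G₁] [Group G₂] [Group G₃]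
    [Group G₀'] [Group G₁'] [Group G₂'] [Group G₃']
    [Finite G₀] [Finite G₁] [Finite G₂] [Finite G₃]
    [Finite G₀'] [Finite G₁'] [Finite G₂'] [Finite G₃']
    (ι₁ : G₀ →* G₁) (ι₂ : G₀ →* G₂) (e₁ : G₁ →* G₃) (e₂ : G₂ →* G₃)
    (ι₁' : G₀' →* G₁') (ι₂' : G₀' →* G₂') (e₁' : G₁' →* G₃') (e₂' : G₂' →* G₃')
    (h : NFfin G₀ G₁ G₂ G₃ ι₁ ι₂ e₁ e₂)
    (h' : NFfin G₀' G₁' G₂' G₃' ι₁' ι₂' e₁' e₂')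
    (f₀ : G₀' ≃* G₀) (f₁ : G₁' ≃* G₁) (f₂ : G₂' ≃* G₂)
    (hf₁ : ∀ g : G₀', f₁ (ι₁' g) = ι₁ (f₀ g))
    (hf₂ : ∀ g : G₀', f₂ (ι₂' g) = ι₂ (f₀ g)) :
    ∃ f₃ : G₃' →* G₃,
      (∀ x : G₁', f₃ (e₁' x) = e₁ (f₁ x)) ∧
      (∀ y : G₂', f₃ (e₂' y) = e₂ (f₂ y)) ∧
      Function.Injective f₃ ∧ Function.Surjective f₃ ∧
      (∀ g : G₃' →* G₃,
        (∀ x : G₁', g (e₁' x) = e₁ (f₁ x)) →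
        (∀ y : G₂', g (e₂' y) = e₂ (f₂ y)) → g = f₃) := by
  classical
  set T : Set (G₃' × G₃) :=
    (Set.range fun z : G₁' => ((e₁' z, e₁ (f₁ z)) : G₃' × G₃)) ∪
    (Set.range fun z : G₂' => ((e₂' z, e₂ (f₂ z)) : G₃' × G₃)) with hT
  set S : Subgroup (G₃' × G₃) := Subgroup.closure T with hS
  have key1 : ∀ p ∈ S, p.1 = 1 → p.2 = 1 := fun p hp =>
    NFfin.key h h' f₀ f₁ f₂ hf₁ hf₂ hp
  have hf₁' : ∀ g : G₀, f₁.symm (ι₁ g) = ι₁' (f₀.symm g) := by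
    intro g
    rw [MulEquiv.symm_apply_eq, hf₁, MulEquiv.apply_symm_apply]
  have hf₂' : ∀ g : G₀, f₂.symm (ι₂ g) = ι₂' (f₀.symm g) := by
    intro g
    rw [MulEquiv.symm_apply_eq, hf₂, MulEquiv.apply_symm_apply]
  have key2 : ∀ p ∈ S, p.2 = 1 → p.1 = 1 := by
    intro p hp h2
    set T' : Set (G₃ × G₃') :=
      (Set.range fun z : G₁ => ((e₁ z, e₁' (f₁.symm z)) : G₃ × G₃')) ∪
      (Set.range fun z : G₂ => ((e₂ z, e₂' (f₂.symm z)) : G₃ × G₃')) with hT'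
    have hmem : ((p.2, p.1) : G₃ × G₃') ∈ Subgroup.closure T' := by
      have h1 : ((p.2, p.1) : G₃ × G₃') ∈
          S.map (MulEquiv.prodComm : G₃' × G₃ ≃* G₃ × G₃').toMonoidHom :=
        ⟨p, hp, rfl⟩
      rw [hS, MonoidHom.map_closure] at h1
      refine Subgroup.closure_mono ?_ h1
      rintro q ⟨q', (⟨z, rfl⟩ | ⟨z, rfl⟩), rfl⟩
      · exact Or.inl ⟨f₁ z, by simp⟩
      · exact Or.inr ⟨f₂ z, by simp⟩
    exact NFfin.key h' h f₀.symm f₁.symm f₂.symm hf₁' hf₂' hmem h2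
  have uniq2 : ∀ (a : G₃') (b b' : G₃), (a, b) ∈ S → (a, b') ∈ S → b = b' := by
    intro a b b' h1 h2
    have hmul : ((a, b)⁻¹ * (a, b') : G₃' × G₃) ∈ S := mul_mem (inv_mem h1) h2
    have := key1 _ hmul (by simp)
    exact inv_mul_eq_one.mp this
  have Ex1 : ∀ a : G₃', ∃ b, (a, b) ∈ S := by
    intro a
    have hmap : S.map (MonoidHom.fst G₃' G₃) = ⊤ := by
      rw [hS, MonoidHom.map_closure, hT, Set.image_union,
        ← Set.range_comp, ← Set.range_comp]
      exact h'.2.2.2.2.2.1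
    have : a ∈ S.map (MonoidHom.fst G₃' G₃) := by rw [hmap]; trivial
    obtain ⟨q, hq, hq1⟩ := this
    exact ⟨q.2, by rwa [← hq1]⟩
  have memS : ∀ a : G₃', (a, (Ex1 a).choose) ∈ S := fun a => (Ex1 a).choose_spec
  set f₃ : G₃' →* G₃ :=
    { toFun := fun a => (Ex1 a).choose
      map_one' := uniq2 1 _ 1 (memS 1) (one_mem S)
      map_mul' := fun a b =>
        uniq2 (a * b) _ _ (memS (a * b)) (mul_mem (memS a) (memS b)) } with hf₃
  have hfmem : ∀ a : G₃', (a, f₃ a) ∈ S := memS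
  have he1 : ∀ z : G₁', f₃ (e₁' z) = e₁ (f₁ z) := fun z =>
    uniq2 _ _ _ (hfmem _) (Subgroup.subset_closure (Or.inl ⟨z, rfl⟩))
  have he2 : ∀ z : G₂', f₃ (e₂' z) = e₂ (f₂ z) := fun z =>
    uniq2 _ _ _ (hfmem _) (Subgroup.subset_closure (Or.inr ⟨z, rfl⟩))
  refine ⟨f₃, he1, he2, ?_, ?_, ?_⟩
  · refine (injective_iff_map_eq_one f₃).mpr ?_
    intro a ha
    exact key2 (a, f₃ a) (hfmem a) ha
  · intro b
    have hmap : S.map (MonoidHom.snd G₃' G₃) = ⊤ := by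
      rw [hS, MonoidHom.map_closure, hT, Set.image_union,
        ← Set.range_comp, ← Set.range_comp]
      have r1 : Set.range ((MonoidHom.snd G₃' G₃) ∘
          fun z : G₁' => ((e₁' z, e₁ (f₁ z)) : G₃' × G₃)) = Set.range e₁ := by
        show Set.range (⇑e₁ ∘ ⇑f₁) = Set.range ⇑e₁
        exact f₁.surjective.range_comp _
      have r2 : Set.range ((MonoidHom.snd G₃' G₃) ∘
          fun z : G₂' => ((e₂' z, e₂ (f₂ z)) : G₃' × G₃)) = Set.range e₂ := by
        show Set.range (⇑e₂ ∘ ⇑f₂) = Set.range ⇑e₂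
        exact f₂.surjective.range_comp _
      rw [r1, r2]
      exact h.2.2.2.2.2.1
    have : b ∈ S.map (MonoidHom.snd G₃' G₃) := by rw [hmap]; trivial
    obtain ⟨q, hq, hq2⟩ := this
    refine ⟨q.1, ?_⟩
    exact uniq2 q.1 _ b (hfmem q.1) (by rwa [← hq2])
  · intro g hg1 hg2
    refine MonoidHom.ext fun a => ?_
    have ha : a ∈ Subgroup.closure (Set.range ⇑e₁' ∪ Set.range ⇑e₂') := by
      rw [h'.2.2.2.2.2.1]; trivial
    induction ha using Subgroup.closure_induction with
    | mem z hz =>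
      rcases hz with ⟨z, rfl⟩ | ⟨z, rfl⟩
      · rw [hg1, he1]
      · rw [hg2, he2]
    | one => rw [map_one, map_one]
    | mul a b _ _ iha ihb => rw [map_mul, map_mul, iha, ihb]
    | inv a _ iha => rw [map_inv, map_inv, iha]
end
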